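/- arXiv:1509.05275 — 6 statements merged into one kernel-verified Lean document; each statement's English description precedes it below -/
import Mathlib

section
/- Let G be an abelian group, A a G-graded algebra over an algebraically closed field F, and V a finite-dimensional simple A-module. If Γ and Γ′ are two G-gradings on the vector space V each making V a G-graded A-module (i.e. A_g · V_h ⊆ V_{gh}), then there exists d ∈ G such that Γ′ is the right shift of Γ by d, i.e. V′_{gd} = V_g for all g ∈ G. -/
open DirectSum

/-- Auxiliary: one inclusion.  Given two gradings on a simple module, there is a shift `d`
with `Γ g ≤ Γ' (g * d)` for all `g`. -/
theorem aux_shift_le (F : Type*) [Field F] [IsAlgClosed F] (G : Type*) [CommGroup G]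
    (A : Type*) [Ring A] [Algebra F A]
    (𝒜 : G → Submodule F A)
    (h𝒜top : (⨆ g, 𝒜 g) = ⊤)
    (V : Type*) [AddCommGroup V] [Module A V] [Module F V] [IsScalarTower F A V]
    [FiniteDimensional F V] [IsSimpleModule A V]
    (Γ Γ' : G → Submodule F V)
    (hΓtop : (⨆ g, Γ g) = ⊤) (hΓind : iSupIndep Γ)
    (hΓ'top : (⨆ g, Γ' g) = ⊤) (hΓ'ind : iSupIndep Γ')
    (hΓmod : ∀ (g h : G) (a : A) (v : V), a ∈ 𝒜 g → v ∈ Γ h → a • v ∈ Γ (g * h))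
    (hΓ'mod : ∀ (g h : G) (a : A) (v : V), a ∈ 𝒜 g → v ∈ Γ' h → a • v ∈ Γ' (g * h)) :
    ∃ d : G, ∀ g : G, Γ g ≤ Γ' (g * d) := by
  classical
  haveI : Nontrivial V := IsSimpleModule.nontrivial A V
  have hΓint : DirectSum.IsInternal Γ :=
    (DirectSum.isInternal_submodule_iff_iSupIndep_and_iSup_eq_top Γ).mpr ⟨hΓind, hΓtop⟩
  have hΓ'int : DirectSum.IsInternal Γ' :=
    (DirectSum.isInternal_submodule_iff_iSupIndep_and_iSup_eq_top Γ').mpr ⟨hΓ'ind, hΓ'top⟩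
  letI := hΓint.chooseDecomposition
  letI := hΓ'int.chooseDecomposition
  -- the projection onto the `Γ' k`-component, as a linear endomorphism of `V`
  set π' : G → V →ₗ[F] V := fun k =>
    (Γ' k).subtype ∘ₗ (DirectSum.component F G (fun i => ↥(Γ' i)) k) ∘ₗ
      (DirectSum.decomposeLinearEquiv Γ').toLinearMap with hπ'def
  have hπ'apply : ∀ (k : G) (v : V), π' k v = ((DirectSum.decompose Γ' v) k : V) :=
    fun _ _ => rfl
  have hπ'mem : ∀ (k : G) (v : V), π' k v ∈ Γ' k := fun k v => ((DirectSum.decompose Γ' v) k).2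
  have hπ'same : ∀ (k : G) (v : V), v ∈ Γ' k → π' k v = v := fun k v hv =>
    DirectSum.decompose_of_mem_same Γ' hv
  have hπ'ne : ∀ (j k : G) (v : V), v ∈ Γ' j → j ≠ k → π' k v = 0 := fun j k v hv h =>
    DirectSum.decompose_of_mem_ne Γ' hv h
  -- equivariance of the projections with respect to homogeneous elements of `A`
  have hequiv : ∀ (h : G) (a : A), a ∈ 𝒜 h → ∀ (g : G) (v : V),
      π' (h * g) (a • v) = a • π' g v := by
    intro h a ha g v
    have hv : v ∈ ⨆ k, Γ' k := by rw [hΓ'top]; trivial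
    induction hv using Submodule.iSup_induction' with
    | mem k w hw =>
        rcases eq_or_ne g k with rfl | hne
        · rw [hπ'same _ _ hw, hπ'same _ _ (hΓ'mod h g a w ha hw)]
        · rw [hπ'ne _ _ _ hw hne.symm, smul_zero,
            hπ'ne _ _ _ (hΓ'mod h k a w ha hw)
              (fun hc => hne.symm (mul_left_cancel hc))]
    | zero => rw [smul_zero, map_zero, map_zero, smul_zero]
    | add x y hx hy ihx ihy => rw [smul_add, map_add, map_add, smul_add, ihx, ihy]
  -- pick a nonzero homogeneous vector `v ∈ Γ g₀`
  have htopbot : (⊤ : Submodule F V) ≠ ⊥ := by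
    obtain ⟨x, hx⟩ := exists_ne (0 : V)
    intro hc
    exact hx ((Submodule.mem_bot F).mp (hc ▸ Submodule.mem_top))
  have hex : ∃ g₀ : G, Γ g₀ ≠ ⊥ := by
    by_contra hc
    push_neg at hc
    exact htopbot (by rw [← hΓtop]; exact iSup_eq_bot.mpr hc)
  obtain ⟨g₀, hg₀⟩ := hex
  obtain ⟨v, hvmem, hvne⟩ := (Submodule.ne_bot_iff _).mp hg₀
  -- some `Γ'`-component of `v` is nonzero
  have hkex : ∃ k, π' k v ≠ 0 := by
    by_contra hc
    push_neg at hc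
    apply hvne
    have h0 : DirectSum.decomposeLinearEquiv Γ' v = 0 := by
      refine DFinsupp.ext fun k => ?_
      have := hc k
      rw [hπ'apply] at this
      simpa [DirectSum.decomposeLinearEquiv_apply] using this
    simpa using (DirectSum.decomposeLinearEquiv Γ').map_eq_zero_iff.mp h0
  obtain ⟨k, hkne⟩ := hkex
  set d : G := g₀⁻¹ * k with hddef
  have hg0d : g₀ * d = k := by rw [hddef, mul_inv_cancel_left]
  -- the intertwining operator
  set P : V →ₗ[F] V :=
    (DirectSum.toModule F G V (fun g => π' (g * d) ∘ₗ (Γ g).subtype)) ∘ₗ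
      (DirectSum.decomposeLinearEquiv Γ).toLinearMap with hPdef
  have hP : ∀ (g : G) (w : V), w ∈ Γ g → P w = π' (g * d) w := by
    intro g w hw
    have h1 : DirectSum.decompose Γ w = DirectSum.of (fun i => ↥(Γ i)) g ⟨w, hw⟩ :=
      DirectSum.decompose_of_mem Γ hw
    rw [hPdef]
    simp only [LinearMap.comp_apply, LinearEquiv.coe_toLinearMap,
      DirectSum.decomposeLinearEquiv_apply, h1, ← DirectSum.lof_eq_of F,
      DirectSum.toModule_lof]
    rfl
  -- `P` commutes with the action of `A`
  have hPA : ∀ (a : A) (w : V), P (a • w) = a • P w := by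
    have hhom : ∀ (h : G) (a : A), a ∈ 𝒜 h → ∀ w : V, P (a • w) = a • P w := by
      intro h a ha w
      have hw : w ∈ ⨆ g, Γ g := by rw [hΓtop]; trivial
      induction hw using Submodule.iSup_induction' with
      | mem g x hx =>
          rw [hP g x hx, hP (h * g) (a • x) (hΓmod h g a x ha hx), mul_assoc]
          exact hequiv h a ha (g * d) x
      | zero => rw [smul_zero, map_zero, smul_zero]
      | add x y hx hy ihx ihy => rw [smul_add, map_add, map_add, smul_add, ihx, ihy]
    intro a w
    have haA : a ∈ ⨆ g, 𝒜 g := by rw [h𝒜top]; trivial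
    induction haA using Submodule.iSup_induction' with
    | mem h b hb => exact hhom h b hb w
    | zero => rw [zero_smul, map_zero, zero_smul]
    | add x y hx hy ihx ihy => rw [add_smul, add_smul, map_add, ihx, ihy]
  -- scalars commute with the `A`-action
  have hsc : ∀ (t : F) (a : A) (u : V), a • (t • u) = t • (a • u) := by
    intro t a u
    rw [← algebraMap_smul A t u, ← mul_smul, ← Algebra.commutes, mul_smul, algebraMap_smul]
  -- Schur's lemma: `P` is a scalar
  obtain ⟨c, hc⟩ := Module.End.exists_eigenvalue (P : Module.End F V)
  obtain ⟨w, hwv⟩ := hc.exists_hasEigenvector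
  set K : Submodule A V :=
    { carrier := {u | P u = c • u}
      add_mem' := by
        intro x y hx hy
        simp only [Set.mem_setOf_eq] at *
        rw [map_add, hx, hy, smul_add]
      zero_mem' := by simp
      smul_mem' := by
        intro a u hu
        simp only [Set.mem_setOf_eq] at *
        rw [hPA, hu, hsc] } with hKdef
  have hwK : w ∈ K := hwv.apply_eq_smul
  have hKtop : K = ⊤ := by
    rcases eq_bot_or_eq_top K with h | h
    · exact absurd ((Submodule.mem_bot A).mp (h ▸ hwK)) hwv.right
    · exact h
  have hPall : ∀ u : V, P u = c • u := fun u => by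
    have : u ∈ K := hKtop ▸ Submodule.mem_top
    exact this
  -- `c ≠ 0`
  have hc0 : c ≠ 0 := by
    intro h0
    apply hkne
    have h1 : P v = π' (g₀ * d) v := hP g₀ v hvmem
    rw [hPall v, h0, zero_smul] at h1
    rw [← hg0d]
    exact h1.symm
  -- `c = 1`
  have hc1 : c = 1 := by
    have h1 : π' (g₀ * d) v = c • v := by rw [← hP g₀ v hvmem, hPall]
    have h2 : π' (g₀ * d) (π' (g₀ * d) v) = π' (g₀ * d) v :=
      hπ'same _ _ (hπ'mem _ _)
    rw [h1, map_smul, h1, smul_smul] at h2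
    have h3 : (c * c - c) • v = 0 := by rw [sub_smul, h2, sub_self]
    have h4 : c * c - c = 0 := by
      rcases smul_eq_zero.mp h3 with h | h
      · exact h
      · exact absurd h hvne
    have h5 : c * (c - 1) = 0 := by linear_combination h4
    rcases mul_eq_zero.mp h5 with h | h
    · exact absurd h hc0
    · exact sub_eq_zero.mp h
  -- conclusion
  refine ⟨d, fun g u hu => ?_⟩
  have h1 : P u = π' (g * d) u := hP g u hu
  rw [hPall u, hc1, one_smul] at h1
  rw [h1]
  exact hπ'mem (g * d) u

/-- Let `A` be a `G`-graded algebra over an algebraically closed field `F`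
and `V` a finite-dimensional simple `A`-module.  Any two `G`-gradings on `V` making it a
graded `A`-module differ by a shift: there is `d ∈ G` with `Γ'_{gd} = Γ_g` for all `g`. -/
theorem stmt_7 (F : Type*) [Field F] [IsAlgClosed F] (G : Type*) [CommGroup G]
    (A : Type*) [Ring A] [Algebra F A]
    (𝒜 : G → Submodule F A)
    (h𝒜mul : ∀ (g h : G) (a b : A), a ∈ 𝒜 g → b ∈ 𝒜 h → a * b ∈ 𝒜 (g * h))
    (h𝒜top : (⨆ g, 𝒜 g) = ⊤) (h𝒜ind : iSupIndep 𝒜)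
    (V : Type*) [AddCommGroup V] [Module A V] [Module F V] [IsScalarTower F A V]
    [FiniteDimensional F V] [IsSimpleModule A V]
    (Γ Γ' : G → Submodule F V)
    (hΓtop : (⨆ g, Γ g) = ⊤) (hΓind : iSupIndep Γ)
    (hΓ'top : (⨆ g, Γ' g) = ⊤) (hΓ'ind : iSupIndep Γ')
    (hΓmod : ∀ (g h : G) (a : A) (v : V), a ∈ 𝒜 g → v ∈ Γ h → a • v ∈ Γ (g * h))
    (hΓ'mod : ∀ (g h : G) (a : A) (v : V), a ∈ 𝒜 g → v ∈ Γ' h → a • v ∈ Γ' (g * h)) :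
    ∃ d : G, ∀ g : G, Γ' (g * d) = Γ g := by
  haveI : Nontrivial V := IsSimpleModule.nontrivial A V
  obtain ⟨d, hd⟩ := aux_shift_le F G A 𝒜 h𝒜top V Γ Γ' hΓtop hΓind hΓ'top hΓ'ind hΓmod hΓ'mod
  obtain ⟨e, he⟩ := aux_shift_le F G A 𝒜 h𝒜top V Γ' Γ hΓ'top hΓ'ind hΓtop hΓind hΓ'mod hΓmod
  have htopbot : (⊤ : Submodule F V) ≠ ⊥ := by
    obtain ⟨x, hx⟩ := exists_ne (0 : V)
    intro hc
    exact hx ((Submodule.mem_bot F).mp (hc ▸ Submodule.mem_top))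
  have hde : d * e = 1 := by
    by_contra hne
    have hbot : ∀ g, Γ g = ⊥ := by
      intro g
      have h1 : Γ g ≤ Γ (g * d * e) := (hd g).trans (he (g * d))
      have hne' : g * d * e ≠ g := by
        intro hcc
        apply hne
        rw [mul_assoc] at hcc
        calc d * e = g⁻¹ * (g * (d * e)) := by rw [inv_mul_cancel_left]
        _ = g⁻¹ * g := by rw [hcc]
        _ = 1 := inv_mul_cancel g
      have hle : Γ (g * d * e) ≤ ⨆ (j) (_ : j ≠ g), Γ j :=
        le_iSup₂ (f := fun j (_ : j ≠ g) => Γ j) (g * d * e) hne'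
      exact (hΓind g).eq_bot_of_le (h1.trans hle)
    exact htopbot (by rw [← hΓtop]; exact iSup_eq_bot.mpr hbot)
  refine ⟨d, fun g => le_antisymm ?_ (hd g)⟩
  have h1 := he (g * d)
  rwa [mul_assoc, hde, mul_one] at h1
end

section
/- Let V be a finite-dimensional vector space over an algebraically closed field and let Γ, Γ′ be two gradings of V by an abelian group G that induce the same G-grading on End(V) (where a linear map T has degree h if T(V_g) ⊆ V_{hg} for all g). Then Γ′ is a shift of Γ: there exists d ∈ G with V′_{gd} = V_g for all g. -/
open DirectSum

lemma aux_proj {F : Type*} [Field F] {G : Type*} {V : Type*} [AddCommGroup V] [Module F V]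
    (Γ : G → Submodule F V) (htop : (⨆ g, Γ g) = ⊤) (hind : iSupIndep Γ) :
    ∃ π : G → (V →ₗ[F] V),
      (∀ g v, π g v ∈ Γ g) ∧
      (∀ g g0 (v : V), v ∈ Γ g0 → g ≠ g0 → π g v = 0) ∧
      (∀ g (v : V), v ∈ Γ g → π g v = v) ∧
      (∀ v : V, ∃ s : Finset G, v = ∑ g ∈ s, π g v) := by
  classical
  have hI : DirectSum.IsInternal Γ :=
    (DirectSum.isInternal_submodule_iff_iSupIndep_and_iSup_eq_top Γ).mpr ⟨hind, htop⟩
  set e : (⨁ g, Γ g) ≃ₗ[F] V := LinearEquiv.ofBijective (DirectSum.coeLinearMap Γ) hI with he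
  refine ⟨fun g => (Γ g).subtype ∘ₗ (DirectSum.component F G (fun g => Γ g) g) ∘ₗ
    e.symm.toLinearMap, ?_, ?_, ?_, ?_⟩
  · intro g v; exact Submodule.coe_mem _
  · intro g g0 v hv hne
    simp only [LinearMap.coe_comp, Function.comp_apply, LinearEquiv.coe_coe,
      Submodule.coe_subtype]
    have : e.symm v g = 0 := by
      have := hI.ofBijective_coeLinearMap_of_ne (i := g0) (j := g) hne.symm ⟨v, hv⟩
      simpa [he] using this
    have h0 : ((DirectSum.component F G (fun g => Γ g) g) (e.symm v)) = 0 := this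
    rw [h0, ZeroMemClass.coe_zero]
  · intro g v hv
    simp only [LinearMap.coe_comp, Function.comp_apply, LinearEquiv.coe_coe,
      Submodule.coe_subtype]
    have : e.symm v g = ⟨v, hv⟩ := by
      have := hI.ofBijective_coeLinearMap_of_mem (i := g) hv
      simpa [he] using this
    have h0 : ((DirectSum.component F G (fun g => Γ g) g) (e.symm v)) = ⟨v, hv⟩ := this
    rw [h0]
  · intro v
    set x := e.symm v with hx
    refine ⟨x.support, ?_⟩
    have hπ : ∀ g : G, ((Γ g).subtype ∘ₗ (DirectSum.component F G (fun g => Γ g) g) ∘ₗ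
        e.symm.toLinearMap) v = ((x g : V)) := by
      intro g
      rfl
    have hv : v = e x := (e.apply_symm_apply v).symm
    have h2 : e x = ∑ g ∈ x.support, ((x g : V)) := by
      conv_lhs => rw [← DirectSum.sum_support_of x]
      rw [map_sum]
      refine Finset.sum_congr rfl fun g _ => ?_
      simp [he, LinearEquiv.ofBijective_apply]
      exact DirectSum.coeLinearMap_of ..
    calc v = e x := hv
      _ = ∑ g ∈ x.support, ((x g : V)) := h2
      _ = ∑ g ∈ x.support, ((Γ g).subtype ∘ₗ (DirectSum.component F G (fun g => Γ g) g) ∘ₗ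
          e.symm.toLinearMap) v := Finset.sum_congr rfl fun g _ => (hπ g).symm

lemma cg_cancel1 {G : Type*} [CommGroup G] (a b c : G) : a * b⁻¹ * c * a⁻¹ = c * b⁻¹ := by
  rw [mul_right_comm (a * b⁻¹) c a⁻¹, mul_right_comm a b⁻¹ a⁻¹]
  simp [mul_comm]

lemma cg_cancel2 {G : Type*} [CommGroup G] {d g h : G} (hk : d = g * d * h⁻¹) : h = g := by
  have h2 : h * d = g * d := by
    rw [mul_comm h d]
    conv_lhs => rw [hk]
    group
  exact mul_right_cancel h2

lemma cg_cancel3 {G : Type*} [CommGroup G] {d g g' : G} (hk : d = g' * g⁻¹) : g' = g * d := by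
  rw [hk, mul_comm g (g' * g⁻¹)]
  group



/-- If two `G`-gradings `Γ, Γ'` of a finite-dimensional vector space `V`
over an algebraically closed field induce the same `G`-grading on `End(V)` (where `T`
has degree `h` iff `T(V_g) ⊆ V_{hg}` for all `g`), then `Γ'` is a shift of `Γ`. -/
theorem stmt_8 (F : Type*) [Field F] [IsAlgClosed F] (G : Type*) [CommGroup G]
    (V : Type*) [AddCommGroup V] [Module F V] [FiniteDimensional F V]
    (Γ Γ' : G → Submodule F V)
    (hΓtop : (⨆ g, Γ g) = ⊤) (hΓind : iSupIndep Γ)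
    (hΓ'top : (⨆ g, Γ' g) = ⊤) (hΓ'ind : iSupIndep Γ')
    (hsame : ∀ h : G,
      {T : V →ₗ[F] V | ∀ (g : G), ∀ v ∈ Γ g, T v ∈ Γ (h * g)} =
      {T : V →ₗ[F] V | ∀ (g : G), ∀ v ∈ Γ' g, T v ∈ Γ' (h * g)}) :
    ∃ d : G, ∀ g : G, Γ' (g * d) = Γ g := by

  classical
  obtain ⟨π, hπmem, hπne, hπeq, hπsum⟩ := aux_proj Γ hΓtop hΓind
  obtain ⟨π', hπ'mem, hπ'ne, hπ'eq, hπ'sum⟩ := aux_proj Γ' hΓ'top hΓ'ind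
  -- π' g preserves each Γ h (it has Γ'-degree 1, hence Γ-degree 1)
  have hπ'Γ : ∀ g h : G, ∀ v ∈ Γ h, π' g v ∈ Γ h := by
    intro g h v hv
    have hmem : π' g ∈ {T : V →ₗ[F] V | ∀ (g0 : G), ∀ v ∈ Γ' g0, T v ∈ Γ' (1 * g0)} := by
      intro g0 v0 hv0
      rw [one_mul]
      by_cases hgg : g = g0
      · subst hgg; rw [hπ'eq g v0 hv0]; exact hv0
      · rw [hπ'ne g g0 v0 hv0 hgg]; exact Submodule.zero_mem _
    rw [← hsame 1] at hmem
    have := hmem h v hv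
    rwa [one_mul] at this
  have hπΓ' : ∀ g h : G, ∀ v ∈ Γ' h, π g v ∈ Γ' h := by
    intro g h v hv
    have hmem : π g ∈ {T : V →ₗ[F] V | ∀ (g0 : G), ∀ v ∈ Γ g0, T v ∈ Γ (1 * g0)} := by
      intro g0 v0 hv0
      rw [one_mul]
      by_cases hgg : g = g0
      · subst hgg; rw [hπeq g v0 hv0]; exact hv0
      · rw [hπne g g0 v0 hv0 hgg]; exact Submodule.zero_mem _
    rw [hsame 1] at hmem
    have := hmem h v hv
    rwa [one_mul] at this
  -- KEY: if v ∈ Γ h1 ⊓ Γ' g1, w ∈ Γ h2 ⊓ Γ' g2 are nonzero, then g2 * h2⁻¹ = g1 * h1⁻¹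
  have key : ∀ (h1 g1 h2 g2 : G) (v w : V), v ∈ Γ h1 → v ∈ Γ' g1 → v ≠ 0 →
      w ∈ Γ h2 → w ∈ Γ' g2 → w ≠ 0 → g2 * h2⁻¹ = g1 * h1⁻¹ := by
    intro h1 g1 h2 g2 v w hv1 hv2 hvne hw1 hw2 hwne
    -- a functional killing Γ h for h ≠ h1 and sending v to 1
    have hvne' : (⟨v, hv1⟩ : Γ h1) ≠ 0 := by
      intro hc; exact hvne (congrArg Subtype.val hc)
    obtain ⟨f, hf⟩ : ∃ f : Module.Dual F (Γ h1), f ⟨v, hv1⟩ ≠ 0 := by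
      by_contra hc; push_neg at hc
      exact hvne' ((Module.forall_dual_apply_eq_zero_iff F _).mp hc)
    set φ0 : Module.Dual F (Γ h1) := (f ⟨v, hv1⟩)⁻¹ • f with hφ0
    set ρ : V →ₗ[F] Γ h1 := LinearMap.codRestrict (Γ h1) (π h1) (hπmem h1) with hρ
    set φ : V →ₗ[F] F := φ0 ∘ₗ ρ with hφ
    have hφv : φ v = 1 := by
      have hρv : ρ v = ⟨v, hv1⟩ := Subtype.ext (hπeq h1 v hv1)
      simp [hφ, hρv, hφ0, inv_mul_cancel₀ hf]
    have hφz : ∀ h : G, h ≠ h1 → ∀ x ∈ Γ h, φ x = 0 := by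
      intro h hne x hx
      have hρx : ρ x = 0 := Subtype.ext (hπne h1 h x hx (fun hc => hne hc.symm))
      simp [hφ, hρx]
    set T : V →ₗ[F] V := (LinearMap.toSpanSingleton F V w) ∘ₗ φ with hT
    have hTapp : ∀ x : V, T x = φ x • w := fun x => rfl
    have hTdeg : T ∈ {S : V →ₗ[F] V | ∀ (g : G), ∀ x ∈ Γ g, S x ∈ Γ (h2 * h1⁻¹ * g)} := by
      intro g x hx
      by_cases hgh : g = h1
      · rw [hTapp]
        have hgrp : h2 * h1⁻¹ * g = h2 := by rw [hgh]; group
        rw [hgrp]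
        exact Submodule.smul_mem _ _ hw1
      · rw [hTapp, hφz g hgh x hx, zero_smul]
        exact Submodule.zero_mem _
    rw [hsame (h2 * h1⁻¹)] at hTdeg
    have hTv : T v ∈ Γ' (h2 * h1⁻¹ * g1) := hTdeg g1 v hv2
    rw [hTapp, hφv, one_smul] at hTv
    -- w ∈ Γ' (h2 h1⁻¹ g1) ∩ Γ' g2, w ≠ 0 ⇒ indices equal
    have heq : h2 * h1⁻¹ * g1 = g2 := by
      by_contra hne
      have hd : Disjoint (Γ' (h2 * h1⁻¹ * g1)) (Γ' g2) :=
        hΓ'ind.pairwiseDisjoint hne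
      exact hwne (Submodule.disjoint_def.mp hd w hTv hw2)
    rw [← heq]
    exact cg_cancel1 h2 h1 g1
  by_cases hV : ∀ g : G, Γ g = ⊥
  · refine ⟨1, fun g => ?_⟩
    have hbot : (⊤ : Submodule F V) = ⊥ := by
      rw [← hΓtop]; simp [hV]
    rw [hV g]
    exact le_antisymm (le_trans le_top hbot.le) bot_le
  · push_neg at hV
    obtain ⟨h1, hh1⟩ := hV
    obtain ⟨v, hv, hvne⟩ := Submodule.exists_mem_ne_zero_of_ne_bot hh1
    obtain ⟨s, hs⟩ := hπ'sum v
    have : ∃ g1 : G, π' g1 v ≠ 0 := by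
      by_contra hc; push_neg at hc
      apply hvne
      rw [hs]
      exact Finset.sum_eq_zero fun g _ => hc g
    obtain ⟨g1, hg1⟩ := this
    have hu1 : π' g1 v ∈ Γ h1 := hπ'Γ g1 h1 v hv
    have hu2 : π' g1 v ∈ Γ' g1 := hπ'mem g1 v
    refine ⟨g1 * h1⁻¹, fun g => ?_⟩
    apply le_antisymm
    · -- Γ' (g * (g1 * h1⁻¹)) ≤ Γ g
      intro x hx
      obtain ⟨t, ht⟩ := hπsum x
      rw [ht]
      apply Submodule.sum_mem
      intro h _
      by_cases hz : π h x = 0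
      · rw [hz]; exact Submodule.zero_mem _
      · have m1 : π h x ∈ Γ h := hπmem h x
        have m2 : π h x ∈ Γ' (g * (g1 * h1⁻¹)) := hπΓ' h _ x hx
        have hk := key h (g * (g1 * h1⁻¹)) h1 g1 (π h x) (π' g1 v) m1 m2 hz hu1 hu2 hg1
        -- hk : g1 * h1⁻¹ = g * (g1 * h1⁻¹) * h⁻¹
        have hhg : h = g := cg_cancel2 hk
        rw [← hhg]
        exact m1
    · -- Γ g ≤ Γ' (g * (g1 * h1⁻¹))
      intro x hx
      obtain ⟨t, ht⟩ := hπ'sum x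
      rw [ht]
      apply Submodule.sum_mem
      intro g' _
      by_cases hz : π' g' x = 0
      · rw [hz]; exact Submodule.zero_mem _
      · have m1 : π' g' x ∈ Γ g := hπ'Γ g' g x hx
        have m2 : π' g' x ∈ Γ' g' := hπ'mem g' x
        have hk := key g g' h1 g1 (π' g' x) (π' g1 v) m1 m2 hz hu1 hu2 hg1
        -- hk : g1 * h1⁻¹ = g' * g⁻¹
        have hgg : g' = g * (g1 * h1⁻¹) := cg_cancel3 hk
        rw [← hgg]
        exact m2
end

section
/- Let F be a field containing a square root i of -1, with char F ≠ 2, char F ∤ n+1, n ≥ 2, and Q = Q(n) the Lie superalgebra with Q⁰ = Q¹ = 𝔰𝔩(n+1,F). The map φ(a + b̲) = -aᵗ + i·(-bᵗ)̲ is an automorphism of Q, and φ² is the parity automorphism υ (identity on Q⁰, minus identity on Q¹); in particular φ has order 4. -/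
open Matrix

abbrev QMat (F : Type*) [Field F] (n : ℕ) :=
  Matrix (Fin (n + 1)) (Fin (n + 1)) F × Matrix (Fin (n + 1)) (Fin (n + 1)) F

/-- If `i² = -1` in `F`, the map `φ(a + b̲) = -aᵗ + i·(-bᵗ)̲` is an
automorphism of the Lie superalgebra `Q(n)`, `φ²` is the parity automorphism `υ`, and
`φ` has order 4. -/
theorem stmt_12 (F : Type*) [Field F] (h2 : ringChar F ≠ 2)
    (n : ℕ) (hn : 2 ≤ n) (hchar : (n + 1 : F) ≠ 0)
    (i : F) (hi : i ^ 2 = -1)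
    (sharp : Matrix (Fin (n + 1)) (Fin (n + 1)) F → Matrix (Fin (n + 1)) (Fin (n + 1)) F)
    (hsharp : ∀ a, sharp a = a - ((n + 1 : F)⁻¹ * Matrix.trace a) • (1 : Matrix (Fin (n + 1)) (Fin (n + 1)) F))
    (B : QMat F n → QMat F n → QMat F n)
    (hB : ∀ p q, B p q = (p.1 * q.1 - q.1 * p.1 + sharp (p.2 * q.2 + q.2 * p.2),
      p.1 * q.2 - q.2 * p.1 + p.2 * q.1 - q.1 * p.2))
    (φ : QMat F n → QMat F n)
    (hφ : ∀ p, φ p = (-(p.1)ᵀ, i • (-(p.2)ᵀ))) :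
    -- φ is an automorphism of Q:
    (∀ p q, φ (p + q) = φ p + φ q) ∧ (∀ (c : F) p, φ (c • p) = c • φ p) ∧
    (∀ p : QMat F n, Matrix.trace p.1 = 0 → Matrix.trace p.2 = 0 →
      Matrix.trace (φ p).1 = 0 ∧ Matrix.trace (φ p).2 = 0) ∧
    (∀ q : QMat F n, Matrix.trace q.1 = 0 → Matrix.trace q.2 = 0 →
      ∃ p : QMat F n, Matrix.trace p.1 = 0 ∧ Matrix.trace p.2 = 0 ∧ φ p = q) ∧
    Function.Injective φ ∧
    (∀ a, (φ (a, 0)).2 = 0) ∧ (∀ x, (φ (0, x)).1 = 0) ∧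
    (∀ p q : QMat F n, Matrix.trace p.1 = 0 → Matrix.trace p.2 = 0 →
      Matrix.trace q.1 = 0 → Matrix.trace q.2 = 0 → φ (B p q) = B (φ p) (φ q)) ∧
    -- φ² is the parity automorphism υ
    (∀ p : QMat F n, φ (φ p) = (p.1, -p.2)) ∧
    -- in particular φ has order 4
    (∀ p : QMat F n, φ (φ (φ (φ p))) = p) ∧
    ¬ (∀ p : QMat F n, Matrix.trace p.1 = 0 → Matrix.trace p.2 = 0 → φ (φ p) = p) := by
  have hii : i * i = -1 := by rw [← pow_two]; exact hi
  have hsq : ∀ p : QMat F n, φ (φ p) = (p.1, -p.2) := by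
    intro p
    simp [hφ, smul_smul, ← hi]
    ring_nf
    simp [pow_two, hi]
  have h4 : ∀ p : QMat F n, φ (φ (φ (φ p))) = p := by
    intro p; rw [hsq, hsq]; simp
  refine ⟨?_, ?_, ?_, ?_, ?_, ?_, ?_, ?_, hsq, h4, ?_⟩
  · intro p q; simp [hφ, Prod.ext_iff]
    exact ⟨add_comm _ _, add_comm _ _⟩
  · intro c p; simp [hφ, Prod.ext_iff, smul_comm c i]
  · intro p h1 h2; simp [hφ, h1, h2]
  · intro q hq1 hq2
    refine ⟨φ (φ (φ q)), ?_, ?_, h4 q⟩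
    · simp [hφ, hq1]
    · simp [hφ, hq2]
  · intro p q h; have := congrArg (φ ∘ φ ∘ φ) h; simpa [h4] using this
  · intro a; simp [hφ]
  · intro x; simp [hφ]
  · intro p q _ _ _ _
    have hsneg : ∀ a, sharp (-a) = - sharp a := by
      intro a; simp [hsharp]; module
    have hst : ∀ a, sharp (aᵀ) = (sharp a)ᵀ := by
      intro a; simp [hsharp, Matrix.transpose_sub, Matrix.transpose_smul]
    simp only [hφ, hB, Prod.mk.injEq]
    constructor
    · rw [show (i • -(p.2)ᵀ * i • -(q.2)ᵀ + i • -(q.2)ᵀ * i • -(p.2)ᵀ)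
          = -((p.2 * q.2 + q.2 * p.2)ᵀ) by
        simp only [Matrix.smul_mul, Matrix.mul_smul, smul_smul, hii, neg_smul, one_smul,
          neg_mul_neg, Matrix.transpose_add, Matrix.transpose_mul]
        module]
      rw [hsneg, hst]
      simp only [Matrix.transpose_add, Matrix.transpose_sub, Matrix.transpose_mul,
        neg_mul_neg]
      abel
    · simp only [Matrix.smul_mul, Matrix.mul_smul, Matrix.transpose_add, Matrix.transpose_sub,
        Matrix.transpose_mul, neg_mul, mul_neg, neg_neg, smul_neg]
      module
  · intro H
    have h01 : (0 : Fin (n+1)) ≠ 1 := by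
      have h1 : ((1:Fin (n+1)):ℕ) = 1 := by rw [Fin.val_one']; exact Nat.mod_eq_of_lt (by omega)
      intro h; rw [Fin.ext_iff, h1] at h; simp at h
    set E : Matrix (Fin (n+1)) (Fin (n+1)) F := Matrix.single 0 1 1 with hE
    have htr : Matrix.trace E = 0 := Matrix.trace_single_eq_of_ne 0 1 1 h01
    have hpp := H (0, E) (by simp) htr
    rw [hsq] at hpp
    have h2' : E = -E := by simpa [Prod.ext_iff] using hpp.symm
    have hone : (E 0 1 : F) = - E 0 1 := by rw [← Matrix.neg_apply, ← h2']
    simp [hE] at hone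
    have h20 : (2:F) = 0 := by linear_combination hone
    have hd : ringChar F ∣ 2 := ringChar.dvd (by exact_mod_cast h20)
    rcases (Nat.prime_two.eq_one_or_self_of_dvd _ hd) with h | h
    · exact CharP.ringChar_ne_one h
    · exact h2 h
end

section
/- Let F be algebraically closed with char F ≠ 2, char F ∤ n+1, n ≥ 2, and Q = Q(n) the Lie superalgebra. Every automorphism ψ of the Lie algebra Q⁰ = 𝔰𝔩(n+1,F) extends to an automorphism of the Lie superalgebra Q; i.e. the restriction map Aut(Q) → Aut(Q⁰) is surjective. -/
open Matrix
open Polynomial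

section Aux

variable {F : Type*} [Field F] {m : ℕ}

/-- elementary matrix -/
def EE (i j : Fin m) : Matrix (Fin m) (Fin m) F := Matrix.single i j 1

lemma EE_apply (i j p q : Fin m) :
    (EE i j : Matrix (Fin m) (Fin m) F) p q = if i = p ∧ j = q then 1 else 0 := rfl

lemma EE_mul (i j k l : Fin m) :
    (EE i j : Matrix (Fin m) (Fin m) F) * EE k l = if j = k then EE i l else 0 := by
  by_cases h : j = k
  · subst h; simp [EE, Matrix.single_mul_single_same]
  · simp [EE, Matrix.single_mul_single_of_ne (h := h), h]

lemma lie_EE (i j k l : Fin m) :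
    (EE i j : Matrix (Fin m) (Fin m) F) * EE k l - EE k l * EE i j
      = (if j = k then EE i l else 0) - (if l = i then EE k j else 0) := by
  rw [EE_mul, EE_mul]

lemma trace_EE (i j : Fin m) :
    trace (EE i j : Matrix (Fin m) (Fin m) F) = if i = j then 1 else 0 := by
  classical
  simp only [Matrix.trace, Matrix.diag, EE_apply]
  by_cases h : i = j
  · subst h; simp
  · rw [if_neg h]
    refine Finset.sum_eq_zero fun t _ => ?_
    by_cases h1 : i = t <;> by_cases h2 : j = t <;> simp_all

lemma trace_EE_ne {i j : Fin m} (h : i ≠ j) :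
    trace (EE i j : Matrix (Fin m) (Fin m) F) = 0 := by
  rw [trace_EE, if_neg h]

lemma trace_EE_diff (i j : Fin m) :
    trace ((EE i i : Matrix (Fin m) (Fin m) F) - EE j j) = 0 := by
  rw [trace_sub, trace_EE, trace_EE]; simp


lemma EE_mul_apply (i j : Fin m) (M : Matrix (Fin m) (Fin m) F) (p q : Fin m) :
    ((EE i j : Matrix (Fin m) (Fin m) F) * M) p q = if i = p then M j q else 0 := by
  rw [Matrix.mul_apply]
  by_cases h : i = p
  · subst h
    rw [if_pos rfl]
    rw [Finset.sum_eq_single j]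
    · simp [EE_apply]
    · intro b _ hb; simp [EE_apply, Ne.symm hb]
    · intro hj; exact absurd (Finset.mem_univ j) hj
  · rw [if_neg h]
    refine Finset.sum_eq_zero fun b _ => ?_
    simp [EE_apply, h]

lemma mul_EE_apply (i j : Fin m) (M : Matrix (Fin m) (Fin m) F) (p q : Fin m) :
    (M * (EE i j : Matrix (Fin m) (Fin m) F)) p q = if j = q then M p i else 0 := by
  rw [Matrix.mul_apply]
  by_cases h : j = q
  · subst h
    rw [if_pos rfl]
    rw [Finset.sum_eq_single i]
    · simp [EE_apply]
    · intro b _ hb; simp [EE_apply, Ne.symm hb]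
    · intro hj; exact absurd (Finset.mem_univ i) hj
  · rw [if_neg h]
    refine Finset.sum_eq_zero fun b _ => ?_
    simp [EE_apply, h]

/-- invariant symmetric bilinear pack -/
structure IBil (m : ℕ) (F : Type*) [Field F]
    (T : Matrix (Fin m) (Fin m) F → Matrix (Fin m) (Fin m) F → Matrix (Fin m) (Fin m) F) :
    Prop where
  addl : ∀ x x' y, trace x = 0 → trace x' = 0 → trace y = 0 → T (x + x') y = T x y + T x' y
  smull : ∀ (c : F) x y, trace x = 0 → trace y = 0 → T (c • x) y = c • T x y
  symm : ∀ x y, trace x = 0 → trace y = 0 → T x y = T y x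
  inv : ∀ a x y, trace a = 0 → trace x = 0 → trace y = 0 →
      a * T x y - T x y * a = T (a * x - x * a) y + T x (a * y - y * a)
  tr0 : ∀ x y, trace x = 0 → trace y = 0 → trace (T x y) = 0

namespace IBil

variable {T : Matrix (Fin m) (Fin m) F → Matrix (Fin m) (Fin m) F → Matrix (Fin m) (Fin m) F}

lemma addr (h : IBil m F T) (x y y' : Matrix (Fin m) (Fin m) F)
    (hx : trace x = 0) (hy : trace y = 0) (hy' : trace y' = 0) :
    T x (y + y') = T x y + T x y' := by
  rw [h.symm x (y + y') hx (by rw [trace_add, hy, hy']; ring),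
    h.addl y y' x hy hy' hx, h.symm y x hy hx, h.symm y' x hy' hx]

lemma smulr (h : IBil m F T) (c : F) (x y : Matrix (Fin m) (Fin m) F)
    (hx : trace x = 0) (hy : trace y = 0) : T x (c • y) = c • T x y := by
  rw [h.symm x (c • y) hx (by rw [trace_smul, hy]; simp),
    h.smull c y x hy hx, h.symm y x hy hx]

lemma zerol (h : IBil m F T) (y : Matrix (Fin m) (Fin m) F) (hy : trace y = 0) :
    T 0 y = 0 := by
  have : T ((0:F) • (0 : Matrix (Fin m) (Fin m) F)) y = (0:F) • T 0 y :=
    h.smull 0 0 y (by simp) hy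
  simpa using this

lemma zeror (h : IBil m F T) (x : Matrix (Fin m) (Fin m) F) (hx : trace x = 0) :
    T x 0 = 0 := by
  rw [h.symm x 0 hx (by simp), h.zerol x hx]

lemma negr (h : IBil m F T) (x y : Matrix (Fin m) (Fin m) F)
    (hx : trace x = 0) (hy : trace y = 0) : T x (-y) = - T x y := by
  have := h.smulr (-1 : F) x y hx hy
  simpa using this

lemma subr (h : IBil m F T) (x y y' : Matrix (Fin m) (Fin m) F)
    (hx : trace x = 0) (hy : trace y = 0) (hy' : trace y' = 0) :
    T x (y - y') = T x y - T x y' := by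
  rw [sub_eq_add_neg, h.addr x y (-y') hx hy (by simp [hy']), h.negr x y' hx hy', sub_eq_add_neg]

lemma negl (h : IBil m F T) (x y : Matrix (Fin m) (Fin m) F)
    (hx : trace x = 0) (hy : trace y = 0) : T (-x) y = - T x y := by
  have := h.smull (-1 : F) x y hx hy
  simpa using this

lemma sumr (h : IBil m F T) (x : Matrix (Fin m) (Fin m) F) (hx : trace x = 0)
    {ι : Type*} (s : Finset ι) (g : ι → Matrix (Fin m) (Fin m) F)
    (hg : ∀ i ∈ s, trace (g i) = 0) (hz : ∀ i ∈ s, T x (g i) = 0) :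
    T x (∑ i ∈ s, g i) = 0 := by
  classical
  induction s using Finset.induction_on with
  | empty => simpa using h.zeror x hx
  | @insert a s ha ih =>
      rw [Finset.sum_insert ha]
      rw [h.addr x _ _ hx (hg a (by simp)) (by
        rw [trace_sum]; exact Finset.sum_eq_zero fun i hi => hg i (by simp [hi]))]
      rw [hz a (by simp), ih (fun i hi => hg i (by simp [hi])) (fun i hi => hz i (by simp [hi]))]
      simp

end IBil

/-- coefficient function for genericity -/
def cf (p j l q i k t : Fin m) : ℤ :=
  (if p = t then 1 else 0) + (if j = t then 1 else 0) + (if l = t then 1 else 0)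
    - (if q = t then 1 else 0) - (if i = t then 1 else 0) - (if k = t then 1 else 0)

lemma exists_generic (F : Type*) [Field F] [Infinite F] (m : ℕ) (hmF : (m:F) ≠ 0) :
    ∃ d : Fin m → F, (∑ t, d t) = 0 ∧ ∀ p q i j k l : Fin m,
      (∃ t, ((cf p j l q i k t : ℤ) : F) ≠ 0) →
      d p + d j + d l - (d q + d i + d k) ≠ 0 := by
  classical
  set P : Fin m → Fin m → Fin m → Fin m → Fin m → Fin m → F[X] :=
    fun p q i j k l => X^(p:ℕ) + X^(j:ℕ) + X^(l:ℕ) - X^(q:ℕ) - X^(i:ℕ) - X^(k:ℕ) with hP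
  have hcoeff : ∀ p q i j k l t : Fin m,
      (P p q i j k l).coeff (t:ℕ) = ((cf p j l q i k t : ℤ) : F) := by
    intro p q i j k l t
    have hv : ∀ a b : Fin m, (((a:ℕ) = (b:ℕ)) ↔ a = b) := fun a b => Fin.val_inj
    simp only [hP, coeff_add, coeff_sub, coeff_X_pow, cf]
    push_cast
    congr 1 <;> [skip; simp [eq_comm, hv]]
    congr 1 <;> [skip; simp [eq_comm, hv]]
    congr 1 <;> [skip; simp [eq_comm, hv]]
    congr 1 <;> [skip; simp [eq_comm, hv]]
    congr 1 <;> simp [eq_comm, hv]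
  -- the set of bad x
  have hbadfin : (⋃ v : Fin m × Fin m × Fin m × Fin m × Fin m × Fin m,
      {x : F | P v.1 v.2.1 v.2.2.1 v.2.2.2.1 v.2.2.2.2.1 v.2.2.2.2.2 ≠ 0 ∧
        IsRoot (P v.1 v.2.1 v.2.2.1 v.2.2.2.1 v.2.2.2.2.1 v.2.2.2.2.2) x}).Finite := by
    refine Set.finite_iUnion ?_
    intro v
    by_cases hv : P v.1 v.2.1 v.2.2.1 v.2.2.2.1 v.2.2.2.2.1 v.2.2.2.2.2 = 0
    · convert Set.finite_empty using 1
      ext y; simp [hv]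
    · exact (Polynomial.finite_setOf_isRoot hv).subset (fun y hy => hy.2)
  obtain ⟨x, hx⟩ := hbadfin.infinite_compl.nonempty
  refine ⟨fun t => x^(t:ℕ) - (m:F)⁻¹ * ∑ u : Fin m, x^(u:ℕ), ?_, ?_⟩
  · rw [Finset.sum_sub_distrib, Finset.sum_const, Finset.card_univ, Fintype.card_fin,
      nsmul_eq_mul, ← mul_assoc, mul_inv_cancel₀ hmF, one_mul, sub_self]
  · intro p q i j k l ⟨t, ht⟩
    have hPne : P p q i j k l ≠ 0 := by
      intro h0
      rw [← hcoeff p q i j k l t] at ht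
      rw [h0] at ht
      simp at ht
    intro heq
    have hroot : IsRoot (P p q i j k l) x := by
      have : eval x (P p q i j k l) = x^(p:ℕ) + x^(j:ℕ) + x^(l:ℕ) - x^(q:ℕ) - x^(i:ℕ) - x^(k:ℕ) := by
        simp [hP]
      rw [IsRoot, this]
      linear_combination heq
    exact hx (Set.mem_iUnion.mpr ⟨(p,q,i,j,k,l), hPne, hroot⟩)
end Aux

section Shape

variable {F : Type*} [Field F] {m : ℕ}

lemma diag_lie (d : Fin m → F) (i j : Fin m) :
    Matrix.diagonal d * (EE i j : Matrix (Fin m) (Fin m) F) - EE i j * Matrix.diagonal d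
      = (d i - d j) • EE i j := by
  ext p q
  by_cases h : i = p ∧ j = q
  · obtain ⟨rfl, rfl⟩ := h
    simp [Matrix.diagonal_mul, Matrix.mul_diagonal, EE_apply]
  · simp only [Matrix.sub_apply, Matrix.diagonal_mul, Matrix.mul_diagonal, Matrix.smul_apply,
      EE_apply, if_neg h]
    simp

lemma shape {T : Matrix (Fin m) (Fin m) F → Matrix (Fin m) (Fin m) F → Matrix (Fin m) (Fin m) F}
    (hT : IBil m F T) {d : Fin m → F} (hd : ∑ t, d t = 0)
    {i j k l : Fin m} (hij : i ≠ j) (hkl : k ≠ l)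
    (p q : Fin m) (hne : d p + d j + d l - (d q + d i + d k) ≠ 0) :
    T (EE i j) (EE k l) p q = 0 := by
  have hD : trace (Matrix.diagonal d) = 0 := by rw [Matrix.trace_diagonal]; exact hd
  have h1 := hT.inv (Matrix.diagonal d) (EE i j) (EE k l) hD (trace_EE_ne hij) (trace_EE_ne hkl)
  rw [diag_lie, diag_lie, hT.smull _ _ _ (trace_EE_ne hij) (trace_EE_ne hkl),
    hT.smulr _ _ _ (trace_EE_ne hij) (trace_EE_ne hkl)] at h1
  have e := congrArg (fun A => A p q) h1
  simp only [Matrix.sub_apply, Matrix.add_apply, Matrix.smul_apply, Matrix.diagonal_mul,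
    Matrix.mul_diagonal, smul_eq_mul] at e
  have h2 : (d p + d j + d l - (d q + d i + d k)) * T (EE i j) (EE k l) p q = 0 := by
    linear_combination e
  rcases mul_eq_zero.mp h2 with h | h
  · exact absurd h hne
  · exact h

/-- invariance etc. for the Jordan-type product -/
lemma S_IBil (hmF : (m:F) ≠ 0)
    (S : Matrix (Fin m) (Fin m) F → Matrix (Fin m) (Fin m) F → Matrix (Fin m) (Fin m) F)
    (hS : ∀ x y, S x y = x*y + y*x - ((m:F)⁻¹ * trace (x*y + y*x)) • (1 : Matrix (Fin m) (Fin m) F)) :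
    IBil m F S := by
  have trS : ∀ x y : Matrix (Fin m) (Fin m) F, trace (S x y) = 0 := by
    intro x y
    rw [hS, trace_sub, trace_smul, trace_one]
    simp only [Fintype.card_fin, smul_eq_mul]
    rw [mul_comm ((m:F)⁻¹) _, mul_assoc, inv_mul_cancel₀ hmF]
    ring
  constructor
  · intro x x' y _ _ _
    rw [hS, hS, hS]
    have : trace ((x + x') * y + y * (x + x')) = trace (x*y + y*x) + trace (x'*y + y*x') := by
      rw [← trace_add]; congr 1; noncomm_ring
    rw [this]
    have e : ((m:F)⁻¹ * (trace (x*y+y*x) + trace (x'*y+y*x'))) • (1:Matrix (Fin m) (Fin m) F)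
        = ((m:F)⁻¹ * trace (x*y+y*x)) • 1 + ((m:F)⁻¹ * trace (x'*y+y*x')) • 1 := by
      rw [mul_add, add_smul]
    rw [e, add_mul, mul_add]
    abel
  · intro c x y _ _
    rw [hS, hS]
    have : trace ((c • x) * y + y * (c • x)) = c * trace (x*y + y*x) := by
      rw [smul_mul_assoc, mul_smul_comm, ← smul_add, trace_smul, smul_eq_mul]
    have e2 : (m:F)⁻¹ * (c * trace (x*y+y*x)) = c * ((m:F)⁻¹ * trace (x*y+y*x)) := by ring
    rw [this, e2, smul_mul_assoc, mul_smul_comm, smul_sub, smul_smul, ← smul_add]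
  · intro x y _ _
    rw [hS, hS]
    have : trace (x*y + y*x) = trace (y*x + x*y) := by rw [add_comm]
    rw [this, add_comm (x*y) (y*x)]
  · intro a x y _ _ _
    rw [hS, hS, hS]
    have htr1 : trace ((a*x - x*a) * y + y * (a*x - x*a)) + trace (x * (a*y - y*a) + (a*y - y*a) * x) = 0 := by
      rw [← trace_add]
      have : (a*x - x*a) * y + y * (a*x - x*a) + (x * (a*y - y*a) + (a*y - y*a) * x)
          = (a * (x*y+y*x) - (x*y+y*x) * a) + ((x*a*y - x*a*y) + (y*a*x - y*a*x)) := by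
        noncomm_ring
      rw [this]
      have e2 : trace (a * (x*y+y*x) - (x*y+y*x) * a) = 0 := by
        rw [trace_sub, Matrix.trace_mul_comm]; ring
      rw [← e2]; congr 1; noncomm_ring
    -- combine
    have expand : a * (x*y + y*x - ((m:F)⁻¹ * trace (x*y+y*x)) • (1:Matrix (Fin m) (Fin m) F))
        - (x*y + y*x - ((m:F)⁻¹ * trace (x*y+y*x)) • 1) * a
        = a * (x*y+y*x) - (x*y+y*x) * a := by
      rw [mul_sub, sub_mul, mul_smul_comm, smul_mul_assoc, mul_one, one_mul]
      abel
    rw [expand]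
    have hmat : ((a*x-x*a)*y + y*(a*x-x*a)) + (x*(a*y-y*a) + (a*y-y*a)*x)
        = a*(x*y+y*x) - (x*y+y*x)*a := by noncomm_ring
    have hsc : ((m:F)⁻¹ * trace ((a*x-x*a)*y + y*(a*x-x*a))) • (1:Matrix (Fin m) (Fin m) F)
        + ((m:F)⁻¹ * trace (x*(a*y-y*a)+(a*y-y*a)*x)) • 1 = 0 := by
      rw [← add_smul, ← mul_add, htr1, mul_zero, zero_smul]
    rw [sub_add_sub_comm, hsc, sub_zero, hmat]
  · intro x y _ _
    exact trS x y

end Shape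


section MultOne

variable {F : Type*} [Field F]

theorem multOne [Infinite F] {m : ℕ} (hm : 3 ≤ m)
    (h2 : (2:F) ≠ 0) (hmF : (m:F) ≠ 0)
    (S T : Matrix (Fin m) (Fin m) F → Matrix (Fin m) (Fin m) F → Matrix (Fin m) (Fin m) F)
    (hS : ∀ x y, S x y = x*y + y*x - ((m:F)⁻¹ * trace (x*y + y*x)) • (1 : Matrix (Fin m) (Fin m) F))
    (hT : IBil m F T) :
    ∃ lam : F, ∀ x y, trace x = 0 → trace y = 0 → T x y = lam • S x y := by
  classical
  obtain ⟨d, hd, hgen⟩ := exists_generic F m hmF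
  obtain ⟨i0, i1, i2, h01, h02, h12⟩ :
      ∃ a b c : Fin m, a ≠ b ∧ a ≠ c ∧ b ≠ c :=
    ⟨⟨0, by omega⟩, ⟨1, by omega⟩, ⟨2, by omega⟩,
      by simp [Fin.ext_iff], by simp [Fin.ext_iff], by simp [Fin.ext_iff]⟩
  have h10 := h01.symm
  have h20 := h02.symm
  have h21 := h12.symm
  have hSIB := S_IBil hmF S hS
  have castne1 : ∀ z : ℤ, (z = 1 ∨ z = -1 ∨ z = 2 ∨ z = -2) → ((z:ℤ):F) ≠ 0 := by
    intro z hz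
    rcases hz with rfl|rfl|rfl|rfl <;> push_cast <;> simp [h2]
  set lam := T (EE i0 i1) (EE i1 i2) i0 i2 with hlam
  set N : Matrix (Fin m) (Fin m) F → Matrix (Fin m) (Fin m) F → Matrix (Fin m) (Fin m) F :=
    fun x y => T x y - lam • S x y with hNdef
  have hNxy : ∀ x y, N x y = T x y - lam • S x y := fun _ _ => rfl
  have hN : IBil m F N := by
    constructor
    · intro x x' y hx hx' hy
      rw [hNxy, hNxy, hNxy, hT.addl x x' y hx hx' hy, hSIB.addl x x' y hx hx' hy, smul_add]
      abel
    · intro c x y hx hy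
      rw [hNxy, hNxy, hT.smull c x y hx hy, hSIB.smull c x y hx hy, smul_sub, smul_comm lam c]
    · intro x y hx hy
      rw [hNxy, hNxy, hT.symm x y hx hy, hSIB.symm x y hx hy]
    · intro a x y ha hx hy
      rw [hNxy, hNxy, hNxy]
      have e1 := hT.inv a x y ha hx hy
      have e2 := hSIB.inv a x y ha hx hy
      rw [mul_sub, sub_mul, mul_smul_comm lam a (S x y), smul_mul_assoc lam (S x y) a]
      have e3 : a * T x y - lam • (a * S x y) - (T x y * a - lam • (S x y * a))
          = (a * T x y - T x y * a) - lam • (a * S x y - S x y * a) := by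
        rw [smul_sub]; abel
      rw [e3, e1, e2, smul_add]
      abel
    · intro x y hx hy
      rw [hNxy, trace_sub, trace_smul, hT.tr0 x y hx hy, hSIB.tr0 x y hx hy]
      simp
  -- value of S on the normalizing pair
  have hS0112 : S (EE i0 i1) (EE i1 i2) = (EE i0 i2 : Matrix (Fin m) (Fin m) F) := by
    rw [hS, EE_mul, EE_mul, if_pos rfl, if_neg h20, add_zero, trace_EE_ne h02,
      mul_zero, zero_smul, sub_zero]
  -- K1 : shape of T on the normalizing pair
  have K1 : ∀ p q : Fin m, ¬(p = i0 ∧ q = i2) → T (EE i0 i1) (EE i1 i2) p q = 0 := by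
    intro p q hpq
    apply shape hT hd h01 h12 p q
    apply hgen
    by_cases hqp : q = p
    · refine ⟨i2, castne1 _ ?_⟩
      by_cases hp : p = i2 <;> simp [cf, hqp, hp, h02, h12] <;> omega
    · by_cases hp0 : p = i0
      · subst hp0
        have hq2 : q ≠ i2 := fun h => hpq ⟨rfl, h⟩
        refine ⟨q, castne1 _ ?_⟩
        by_cases h1q : i1 = q <;>
          simp [cf, h1q, Ne.symm hqp, Ne.symm hq2] <;> omega
      · refine ⟨p, castne1 _ ?_⟩
        by_cases h2p : i2 = p <;> by_cases h1p : i1 = p <;>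
          simp [cf, h2p, h1p, hqp, Ne.symm hp0] <;> omega
  -- N vanishes on the normalizing pair
  have hTmat : T (EE i0 i1) (EE i1 i2) = lam • (EE i0 i2 : Matrix (Fin m) (Fin m) F) := by
    ext p q
    by_cases hpq : p = i0 ∧ q = i2
    · obtain ⟨rfl, rfl⟩ := hpq
      rw [Matrix.smul_apply, EE_apply, if_pos ⟨rfl, rfl⟩, smul_eq_mul, mul_one]
    · rw [K1 p q hpq, Matrix.smul_apply, EE_apply,
        if_neg (fun h : i0 = p ∧ i2 = q => hpq ⟨h.1.symm, h.2.symm⟩), smul_zero]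
  have NC12 : N (EE i0 i1) (EE i1 i2) = 0 := by
    rw [hNxy, hTmat, hS0112, sub_self]
  -- Step A : N (E01) (E01) = 0
  have NA : N (EE i0 i1) (EE i0 i1) = 0 := by
    have NAshape : ∀ p q : Fin m, ¬(p = i1 ∧ q = i0) → N (EE i0 i1) (EE i0 i1) p q = 0 := by
      intro p q hpq
      apply shape hN hd h01 h01 p q
      apply hgen
      by_cases hp1 : p = i1
      · by_cases hq1 : q = i1
        · exact ⟨i1, castne1 _ (by simp [cf, hp1, hq1, h01] <;> omega)⟩
        · have hq0 : ¬(q = i0) := fun h => hpq ⟨hp1, h⟩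
          refine ⟨i0, castne1 _ ?_⟩
          simp [cf, hp1, hq0, h10] <;> omega
      · refine ⟨i1, castne1 _ ?_⟩
        by_cases hq1 : q = i1 <;> simp [cf, hp1, hq1, h01] <;> omega
    have NAsp : N (EE i0 i1) (EE i0 i1) i1 i0 = 0 := by
      have e := hN.inv (EE i0 i1) (EE i0 i1) (EE i0 i1)
        (trace_EE_ne h01) (trace_EE_ne h01) (trace_EE_ne h01)
      simp only [sub_self] at e
      rw [hN.zerol _ (trace_EE_ne h01), hN.zeror _ (trace_EE_ne h01), add_zero] at e
      have e2 := congrArg (fun M : Matrix (Fin m) (Fin m) F => M i1 i1) e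
      simp only [Matrix.sub_apply, EE_mul_apply, mul_EE_apply, Matrix.zero_apply,
        if_neg h01, if_pos rfl, zero_sub, neg_eq_zero] at e2
      exact e2
    ext p q
    rw [Matrix.zero_apply]
    by_cases h : p = i1 ∧ q = i0
    · obtain ⟨rfl, rfl⟩ := h
      exact NAsp
    · exact NAshape p q h
  -- Step B : N (E01) (E00 - E11) = 0
  have NB : N (EE i0 i1) (EE i0 i0 - EE i1 i1) = 0 := by
    have e := hN.inv (EE i1 i0) (EE i0 i1) (EE i0 i1)
      (trace_EE_ne h10) (trace_EE_ne h01) (trace_EE_ne h01)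
    have hbr : (EE i1 i0 : Matrix (Fin m) (Fin m) F) * EE i0 i1 - EE i0 i1 * EE i1 i0
        = (EE i1 i1 : Matrix (Fin m) (Fin m) F) - EE i0 i0 := by
      rw [lie_EE, if_pos rfl, if_pos rfl]
    rw [hbr, NA, mul_zero, zero_mul, sub_self,
      hN.symm (EE i1 i1 - EE i0 i0) (EE i0 i1) (trace_EE_diff _ _) (trace_EE_ne h01)] at e
    have e2 : (2:F) • N (EE i0 i1) (EE i1 i1 - EE i0 i0) = 0 := by
      rw [two_smul]; exact e.symm
    have e3 : N (EE i0 i1) (EE i1 i1 - EE i0 i0) = 0 := by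
      rcases smul_eq_zero.mp e2 with h | h
      · exact absurd h h2
      · exact h
    have hsub : (EE i0 i0 : Matrix (Fin m) (Fin m) F) - EE i1 i1
        = -((EE i1 i1 : Matrix (Fin m) (Fin m) F) - EE i0 i0) := (neg_sub _ _).symm
    rw [hsub, hN.negr _ _ (trace_EE_ne h01) (trace_EE_diff _ _), e3, neg_zero]
  -- Step C : N (E01) (E1j) = 0
  have NC : ∀ j : Fin m, j ≠ i0 → j ≠ i1 → N (EE i0 i1) (EE i1 j) = 0 := by
    intro j hj hj1
    by_cases hj2 : j = i2
    · subst hj2; exact NC12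
    · have e := hN.inv (EE i2 j) (EE i0 i1) (EE i1 i2)
        (trace_EE_ne (Ne.symm hj2)) (trace_EE_ne h01) (trace_EE_ne h12)
      have hbr1 : (EE i2 j : Matrix (Fin m) (Fin m) F) * EE i0 i1 - EE i0 i1 * EE i2 j = 0 := by
        rw [lie_EE, if_neg hj, if_neg h12, sub_zero]
      have hbr2 : (EE i2 j : Matrix (Fin m) (Fin m) F) * EE i1 i2 - EE i1 i2 * EE i2 j
          = -(EE i1 j : Matrix (Fin m) (Fin m) F) := by
        rw [lie_EE, if_neg hj1, if_pos rfl, zero_sub]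
      rw [hbr1, hbr2, NC12, mul_zero, zero_mul, sub_self,
        hN.zerol _ (trace_EE_ne h12), zero_add,
        hN.negr _ _ (trace_EE_ne h01) (trace_EE_ne (Ne.symm hj1))] at e
      exact neg_eq_zero.mp e.symm
  -- Step D : N (E01) (Ejj - E11) = 0
  have ND : ∀ j : Fin m, j ≠ i0 → j ≠ i1 → N (EE i0 i1) (EE j j - EE i1 i1) = 0 := by
    intro j hj hj1
    have e := hN.inv (EE j i1) (EE i0 i1) (EE i1 j)
      (trace_EE_ne hj1) (trace_EE_ne h01) (trace_EE_ne (Ne.symm hj1))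
    have hbr1 : (EE j i1 : Matrix (Fin m) (Fin m) F) * EE i0 i1 - EE i0 i1 * EE j i1 = 0 := by
      rw [lie_EE, if_neg h10, if_neg (Ne.symm hj1), sub_zero]
    have hbr2 : (EE j i1 : Matrix (Fin m) (Fin m) F) * EE i1 j - EE i1 j * EE j i1
        = (EE j j : Matrix (Fin m) (Fin m) F) - EE i1 i1 := by
      rw [lie_EE, if_pos rfl, if_pos rfl]
    rw [hbr1, hbr2, NC j hj hj1, mul_zero, zero_mul, sub_self,
      hN.zerol _ (trace_EE_ne (Ne.symm hj1)), zero_add] at e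
    exact e.symm
  -- Step E : N (E01) (E00 - Ejj) = 0
  have NE : ∀ j : Fin m, j ≠ i0 → N (EE i0 i1) (EE i0 i0 - EE j j) = 0 := by
    intro j hj
    by_cases hj1 : j = i1
    · subst hj1; exact NB
    · have hsplit : (EE i0 i0 : Matrix (Fin m) (Fin m) F) - EE j j
          = ((EE i0 i0 : Matrix (Fin m) (Fin m) F) - EE i1 i1)
            + ((EE i1 i1 : Matrix (Fin m) (Fin m) F) - EE j j) := by abel
      rw [hsplit, hN.addr _ _ _ (trace_EE_ne h01) (trace_EE_diff _ _) (trace_EE_diff _ _), NB]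
      have hsub : (EE i1 i1 : Matrix (Fin m) (Fin m) F) - EE j j
          = -((EE j j : Matrix (Fin m) (Fin m) F) - EE i1 i1) := (neg_sub _ _).symm
      rw [hsub, hN.negr _ _ (trace_EE_ne h01) (trace_EE_diff _ _), ND j hj hj1, neg_zero,
        zero_add]
  -- Step F : N (E01) (E j i0) = 0
  have NF : ∀ j : Fin m, j ≠ i0 → j ≠ i1 → N (EE i0 i1) (EE j i0) = 0 := by
    intro j hj hj1
    have Fshape : ∀ p q : Fin m, ¬(p = j ∧ q = i1) → N (EE i0 i1) (EE j i0) p q = 0 := by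
      intro p q hpq
      apply shape hN hd h01 hj p q
      apply hgen
      by_cases hqp : q = p
      · refine ⟨i1, castne1 _ ?_⟩
        by_cases hp1 : p = i1 <;> simp [cf, hqp, hp1, h01, hj1] <;> omega
      · by_cases hpj : p = j
        · have hq1 : ¬(q = i1) := fun h => hpq ⟨hpj, h⟩
          refine ⟨i1, castne1 _ ?_⟩
          simp [cf, hpj, hq1, h01, hj1] <;> omega
        · refine ⟨p, castne1 _ ?_⟩
          by_cases h1p : i1 = p <;>
            simp [cf, h1p, hqp, fun h : j = p => hpj h.symm] <;> omega
    have e := hN.inv (EE i0 j) (EE i0 i1) (EE j i0)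
      (trace_EE_ne (Ne.symm hj)) (trace_EE_ne h01) (trace_EE_ne hj)
    have hbr1 : (EE i0 j : Matrix (Fin m) (Fin m) F) * EE i0 i1 - EE i0 i1 * EE i0 j = 0 := by
      rw [lie_EE, if_neg hj, if_neg h10, sub_zero]
    have hbr2 : (EE i0 j : Matrix (Fin m) (Fin m) F) * EE j i0 - EE j i0 * EE i0 j
        = (EE i0 i0 : Matrix (Fin m) (Fin m) F) - EE j j := by
      rw [lie_EE, if_pos rfl, if_pos rfl]
    rw [hbr1, hbr2, hN.zerol _ (trace_EE_ne hj), zero_add, NE j hj] at e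
    have e2 := congrArg (fun M : Matrix (Fin m) (Fin m) F => M i0 i1) e
    simp only [Matrix.sub_apply, EE_mul_apply, mul_EE_apply, Matrix.zero_apply,
      if_pos rfl, if_neg hj1, sub_zero] at e2
    ext p q
    rw [Matrix.zero_apply]
    by_cases h : p = j ∧ q = i1
    · obtain ⟨rfl, rfl⟩ := h
      exact e2
    · exact Fshape p q h
  -- Step G : N (E01) (E10) = 0
  have NG : N (EE i0 i1) (EE i1 i0) = 0 := by
    have Gshape : ∀ p q : Fin m, p ≠ q → N (EE i0 i1) (EE i1 i0) p q = 0 := by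
      intro p q hpq
      apply shape hN hd h01 h10 p q
      apply hgen
      refine ⟨p, castne1 _ ?_⟩
      by_cases h1p : i1 = p <;> by_cases h0p : i0 = p <;>
        simp [cf, h1p, h0p, Ne.symm hpq] <;> omega
    have g1 : N (EE i0 i1) (EE i1 i0) i1 i1 - N (EE i0 i1) (EE i1 i0) i0 i0 = 0 := by
      have e := hN.inv (EE i0 i1) (EE i0 i1) (EE i1 i0)
        (trace_EE_ne h01) (trace_EE_ne h01) (trace_EE_ne h10)
      simp only [sub_self] at e
      have hbr2 : (EE i0 i1 : Matrix (Fin m) (Fin m) F) * EE i1 i0 - EE i1 i0 * EE i0 i1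
          = (EE i0 i0 : Matrix (Fin m) (Fin m) F) - EE i1 i1 := by
        rw [lie_EE, if_pos rfl, if_pos rfl]
      rw [hbr2, hN.zerol _ (trace_EE_ne h10), zero_add, NB] at e
      have e2 := congrArg (fun M : Matrix (Fin m) (Fin m) F => M i0 i1) e
      simp only [Matrix.sub_apply, EE_mul_apply, mul_EE_apply, Matrix.zero_apply,
        if_pos rfl, if_true, ite_true] at e2
      exact e2
    have g2 : ∀ j : Fin m, j ≠ i0 → j ≠ i1 →
        N (EE i0 i1) (EE i1 i0) i1 i1 - N (EE i0 i1) (EE i1 i0) j j = 0 := by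
      intro j hj hj1
      have e := hN.inv (EE j i1) (EE i0 i1) (EE i1 i0)
        (trace_EE_ne hj1) (trace_EE_ne h01) (trace_EE_ne h10)
      have hbr1 : (EE j i1 : Matrix (Fin m) (Fin m) F) * EE i0 i1 - EE i0 i1 * EE j i1 = 0 := by
        rw [lie_EE, if_neg h10, if_neg (Ne.symm hj1), sub_zero]
      have hbr2 : (EE j i1 : Matrix (Fin m) (Fin m) F) * EE i1 i0 - EE i1 i0 * EE j i1
          = (EE j i0 : Matrix (Fin m) (Fin m) F) := by
        rw [lie_EE, if_pos rfl, if_neg (Ne.symm hj), sub_zero]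
      rw [hbr1, hbr2, hN.zerol _ (trace_EE_ne h10), zero_add, NF j hj hj1] at e
      have e2 := congrArg (fun M : Matrix (Fin m) (Fin m) F => M j i1) e
      simp only [Matrix.sub_apply, EE_mul_apply, mul_EE_apply, Matrix.zero_apply,
        if_pos rfl, if_true, ite_true] at e2
      exact e2
    have hall : ∀ t : Fin m, N (EE i0 i1) (EE i1 i0) t t = N (EE i0 i1) (EE i1 i0) i0 i0 := by
      intro t
      by_cases ht0 : t = i0
      · rw [ht0]
      · by_cases ht1 : t = i1
        · rw [ht1]; exact sub_eq_zero.mp g1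
        · exact ((sub_eq_zero.mp (g2 t ht0 ht1)).symm.trans (sub_eq_zero.mp g1))
    have htr := hN.tr0 (EE i0 i1) (EE i1 i0) (trace_EE_ne h01) (trace_EE_ne h10)
    have htr2 : (m:F) * N (EE i0 i1) (EE i1 i0) i0 i0 = 0 := by
      have : trace (N (EE i0 i1) (EE i1 i0)) = ∑ t : Fin m, N (EE i0 i1) (EE i1 i0) t t := rfl
      rw [this] at htr
      rw [Finset.sum_congr rfl (fun t _ => hall t), Finset.sum_const, Finset.card_univ,
        Fintype.card_fin, nsmul_eq_mul] at htr
      exact htr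
    have hdiag0 : N (EE i0 i1) (EE i1 i0) i0 i0 = 0 := by
      rcases mul_eq_zero.mp htr2 with h | h
      · exact absurd h hmF
      · exact h
    ext p q
    rw [Matrix.zero_apply]
    by_cases hpq : p = q
    · subst hpq; rw [hall p, hdiag0]
    · exact Gshape p q hpq
  -- Step H : N (E01) (E j i1) = 0
  have NH : ∀ j : Fin m, j ≠ i0 → j ≠ i1 → N (EE i0 i1) (EE j i1) = 0 := by
    intro j hj hj1
    ext p q
    rw [Matrix.zero_apply]
    apply shape hN hd h01 hj1 p q
    apply hgen
    by_cases hp1 : p = i1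
    · by_cases hq1 : q = i1
      · exact ⟨i1, castne1 _ (by simp [cf, hp1, hq1, h01, hj1] <;> omega)⟩
      · refine ⟨i0, castne1 _ ?_⟩
        by_cases hq0 : q = i0 <;> simp [cf, hp1, hq0, hq1, h10, hj] <;> omega
    · refine ⟨i1, castne1 _ ?_⟩
      by_cases hq1 : q = i1 <;> simp [cf, hp1, hq1, h01, hj1] <;> omega
  -- Step I : N (E01) (E i0 j) = 0
  have NI : ∀ j : Fin m, j ≠ i0 → j ≠ i1 → N (EE i0 i1) (EE i0 j) = 0 := by
    intro j hj hj1
    ext p q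
    rw [Matrix.zero_apply]
    apply shape hN hd h01 (Ne.symm hj) p q
    apply hgen
    by_cases hp0 : p = i0
    · refine ⟨i0, castne1 _ ?_⟩
      by_cases hq0 : q = i0 <;> simp [cf, hp0, hq0, h10, hj] <;> omega
    · by_cases hq0 : q = i0
      · refine ⟨i1, castne1 _ ?_⟩
        by_cases hp1 : p = i1 <;> simp [cf, hp1, hq0, h01, h10, hj1] <;> omega
      · refine ⟨i0, castne1 _ ?_⟩
        simp [cf, hp0, hq0, h10, hj] <;> omega
  -- Step J : N (E01) (E k l) = 0, k l fresh
  have NJ : ∀ k l : Fin m, k ≠ i0 → k ≠ i1 → l ≠ i0 → l ≠ i1 → k ≠ l →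
      N (EE i0 i1) (EE k l) = 0 := by
    intro k l hk0 hk1 hl0 hl1 hkl
    ext p q
    rw [Matrix.zero_apply]
    apply shape hN hd h01 hkl p q
    apply hgen
    by_cases hq1 : q = i1
    · by_cases hp1 : p = i1
      · refine ⟨i1, castne1 _ ?_⟩
        simp [cf, hp1, hq1, h01, hk1, hl1] <;> omega
      · by_cases hp0 : p = i0
        · refine ⟨l, castne1 _ ?_⟩
          simp [cf, hp0, hq1, Ne.symm hl0, Ne.symm hl1, fun h : k = l => hkl h,
            fun h : i0 = l => hl0 h.symm, fun h : i1 = l => hl1 h.symm] <;> omega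
        · refine ⟨i0, castne1 _ ?_⟩
          simp [cf, hp0, hq1, h10, hk0, hl0, h01] <;> omega
    · refine ⟨i1, castne1 _ ?_⟩
      by_cases hp1 : p = i1 <;> simp [cf, hp1, hq1, h01, hk1, hl1] <;> omega
  -- decomposition of traceless matrices
  have hdecomp : ∀ y : Matrix (Fin m) (Fin m) F, trace y = 0 →
      y = (∑ pq : Fin m × Fin m,
            if pq.1 ≠ pq.2 then y pq.1 pq.2 • (EE pq.1 pq.2 : Matrix (Fin m) (Fin m) F) else 0)
          + ∑ t : Fin m, (if t ≠ i0 then y t t • ((EE t t : Matrix (Fin m) (Fin m) F) - EE i0 i0) else 0) := by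
    intro y hy
    have htr : ∑ t : Fin m, y t t = 0 := hy
    ext r c
    rw [Matrix.add_apply, Matrix.sum_apply, Matrix.sum_apply]
    by_cases hrc : r = c
    · subst hrc
      have hfirst : ∑ pq : Fin m × Fin m,
          (if pq.1 ≠ pq.2 then y pq.1 pq.2 • (EE pq.1 pq.2 : Matrix (Fin m) (Fin m) F) else 0) r r
            = 0 := by
        refine Finset.sum_eq_zero fun pq _ => ?_
        by_cases hpq : pq.1 ≠ pq.2
        · rw [if_pos hpq, Matrix.smul_apply, EE_apply,
            if_neg (fun h => hpq (h.1.trans h.2.symm)), smul_zero]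
        · rw [if_neg hpq, Matrix.zero_apply]
      rw [hfirst, zero_add]
      by_cases hr0 : r = i0
      · have hterm : ∀ t : Fin m,
            ((if t ≠ i0 then y t t • ((EE t t : Matrix (Fin m) (Fin m) F) - EE i0 i0) else 0) :
              Matrix (Fin m) (Fin m) F) r r
              = (if t = r then 0 else - y t t) := by
          intro t
          by_cases ht : t = i0
          · rw [if_neg (not_not_intro ht), if_pos (ht.trans hr0.symm), Matrix.zero_apply]
          · rw [if_pos ht, if_neg (fun h : t = r => ht (h.trans hr0)), Matrix.smul_apply,
              Matrix.sub_apply, EE_apply, EE_apply,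
              if_neg (fun h : t = r ∧ t = r => ht (h.1.trans hr0)),
              if_pos ⟨hr0.symm, hr0.symm⟩]
            simp
        rw [Finset.sum_congr rfl (fun t _ => hterm t)]
        have hsplit : ∀ t : Fin m, (if t = r then 0 else - y t t)
            = - y t t - (if t = r then - y t t else 0) := by
          intro t
          by_cases ht : t = r <;> simp [ht]
        rw [Finset.sum_congr rfl (fun t _ => hsplit t), Finset.sum_sub_distrib,
          Finset.sum_ite_eq' Finset.univ r (fun t => - y t t)]
        simp only [Finset.mem_univ, if_true]
        have hzero : ∑ t : Fin m, - y t t = 0 := by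
          have := congrArg Neg.neg htr
          simpa using this
        rw [hzero, zero_sub, neg_neg]
      · have hterm : ∀ t : Fin m,
            ((if t ≠ i0 then y t t • ((EE t t : Matrix (Fin m) (Fin m) F) - EE i0 i0) else 0) :
              Matrix (Fin m) (Fin m) F) r r
              = (if t = r then y r r else 0) := by
          intro t
          by_cases ht : t = i0
          · rw [if_neg (not_not_intro ht), if_neg (fun h : t = r => hr0 (h.symm.trans ht)),
              Matrix.zero_apply]
          · rw [if_pos ht]
            by_cases htr2 : t = r
            · subst htr2
              rw [if_pos rfl, Matrix.smul_apply, Matrix.sub_apply, EE_apply, EE_apply,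
                if_pos ⟨rfl, rfl⟩, if_neg (fun h => hr0 h.1.symm)]
              simp
            · rw [if_neg htr2, Matrix.smul_apply, Matrix.sub_apply, EE_apply, EE_apply,
                if_neg (fun h : t = r ∧ t = r => htr2 h.1), if_neg (fun h => hr0 h.1.symm)]
              simp
        rw [Finset.sum_congr rfl (fun t _ => hterm t),
          Finset.sum_ite_eq' Finset.univ r (fun _ => y r r)]
        simp
    · have hsecond : ∑ t : Fin m,
          ((if t ≠ i0 then y t t • ((EE t t : Matrix (Fin m) (Fin m) F) - EE i0 i0) else 0) :
            Matrix (Fin m) (Fin m) F) r c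
            = 0 := by
        refine Finset.sum_eq_zero fun t _ => ?_
        by_cases ht : t ≠ i0
        · rw [if_pos ht, Matrix.smul_apply, Matrix.sub_apply, EE_apply, EE_apply,
            if_neg (fun h => hrc (h.1.symm.trans h.2)), if_neg (fun h => hrc (h.1.symm.trans h.2))]
          simp
        · rw [if_neg ht, Matrix.zero_apply]
      rw [hsecond, add_zero]
      rw [Finset.sum_eq_single (r, c)]
      · rw [if_pos hrc, Matrix.smul_apply, EE_apply, if_pos ⟨rfl, rfl⟩, smul_eq_mul, mul_one]
      · intro b _ hb
        by_cases hb12 : b.1 ≠ b.2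
        · rw [if_pos hb12, Matrix.smul_apply, EE_apply,
            if_neg (fun h : b.1 = r ∧ b.2 = c => hb (Prod.ext h.1 h.2)), smul_zero]
        · rw [if_neg hb12, Matrix.zero_apply]
      · intro hmem
        exact absurd (Finset.mem_univ _) hmem
  -- generic second-argument killer
  have killsecond : ∀ x, trace x = 0 → (∀ p q : Fin m, p ≠ q → N x (EE p q) = 0) →
      (∀ t : Fin m, t ≠ i0 → N x (EE t t - EE i0 i0) = 0) →
      ∀ y, trace y = 0 → N x y = 0 := by
    intro x hx hoff hdg y hy
    have tr1 : ∀ pq : Fin m × Fin m,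
        trace (if pq.1 ≠ pq.2 then y pq.1 pq.2 • (EE pq.1 pq.2 : Matrix (Fin m) (Fin m) F) else 0) = 0 := by
      intro pq
      by_cases hpq : pq.1 ≠ pq.2
      · rw [if_pos hpq, trace_smul, trace_EE_ne hpq, smul_zero]
      · rw [if_neg hpq, trace_zero]
    have tr2 : ∀ t : Fin m,
        trace (if t ≠ i0 then y t t • ((EE t t : Matrix (Fin m) (Fin m) F) - EE i0 i0) else 0) = 0 := by
      intro t
      by_cases ht : t ≠ i0
      · rw [if_pos ht, trace_smul, trace_EE_diff, smul_zero]
      · rw [if_neg ht, trace_zero]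
    rw [hdecomp y hy]
    rw [hN.addr x _ _ hx (by rw [trace_sum]; exact Finset.sum_eq_zero fun pq _ => tr1 pq)
      (by rw [trace_sum]; exact Finset.sum_eq_zero fun t _ => tr2 t)]
    rw [hN.sumr x hx _ _ (fun pq _ => tr1 pq) ?_, hN.sumr x hx _ _ (fun t _ => tr2 t) ?_, add_zero]
    · intro t _
      by_cases ht : t ≠ i0
      · rw [if_pos ht, hN.smulr _ x _ hx (trace_EE_diff _ _), hdg t ht, smul_zero]
      · rw [if_neg ht, hN.zeror x hx]
    · intro pq _
      by_cases hpq : pq.1 ≠ pq.2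
      · rw [if_pos hpq, hN.smulr _ x _ hx (trace_EE_ne hpq), hoff pq.1 pq.2 hpq, smul_zero]
      · rw [if_neg hpq, hN.zeror x hx]
  -- Step K : N (E01) y = 0 for all traceless y
  have NK : ∀ y, trace y = 0 → N (EE i0 i1) y = 0 := by
    apply killsecond _ (trace_EE_ne h01)
    · intro p q hpq
      by_cases hq0 : q = i0
      · subst hq0
        by_cases hp1 : p = i1
        · subst hp1; exact NG
        · exact NF p hpq hp1
      · by_cases hq1 : q = i1
        · subst hq1
          by_cases hp0 : p = i0
          · subst hp0; exact NA
          · exact NH p hp0 hpq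
        · by_cases hp0 : p = i0
          · subst hp0; exact NI q hq0 hq1
          · by_cases hp1 : p = i1
            · subst hp1; exact NC q hq0 hq1
            · exact NJ p q hp0 hp1 hq0 hq1 hpq
    · intro t ht
      have := NE t ht
      have h' : (EE t t : Matrix (Fin m) (Fin m) F) - EE i0 i0 = -(EE i0 i0 - EE t t) := by abel
      rw [h', hN.negr _ _ (trace_EE_ne h01) (trace_EE_diff _ _), this, neg_zero]
  -- Step L : propagation to all traceless x
  have Zbr : ∀ x, trace x = 0 → (∀ y, trace y = 0 → N x y = 0) →
      ∀ a, trace a = 0 → ∀ y, trace y = 0 → N (a*x - x*a) y = 0 := by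
    intro x hx hZ a ha y hy
    have e := hN.inv a x y ha hx hy
    have hay : trace (a*y - y*a) = 0 := by
      rw [trace_sub, Matrix.trace_mul_comm]; ring
    rw [hZ y hy, hZ _ hay, mul_zero, zero_mul, sub_self, add_zero] at e
    exact e.symm
  have Z01 : ∀ y, trace y = 0 → N (EE i0 i1) y = 0 := NK
  have Z0j : ∀ j, j ≠ i0 → ∀ y, trace y = 0 → N (EE i0 j) y = 0 := by
    intro j hj y hy
    by_cases hj1 : j = i1
    · subst hj1; exact Z01 y hy
    · have e := Zbr _ (trace_EE_ne h01) Z01 (EE i1 j) (trace_EE_ne (Ne.symm hj1)) y hy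
      rw [lie_EE, if_neg hj, if_pos rfl] at e
      rw [zero_sub] at e
      have hneg := hN.negl (EE i0 j) y (trace_EE_ne (Ne.symm hj)) hy
      rw [hneg] at e
      exact neg_eq_zero.mp e
  have Zij : ∀ i j : Fin m, i ≠ i0 → j ≠ i0 → i ≠ j → ∀ y, trace y = 0 → N (EE i j) y = 0 := by
    intro i j hi hj hij y hy
    have e := Zbr _ (trace_EE_ne (Ne.symm hj)) (Z0j j hj) (EE i i0) (trace_EE_ne hi) y hy
    rw [lie_EE, if_pos rfl, if_neg (Ne.symm hij), sub_zero] at e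
    exact e
  have Zi0 : ∀ i : Fin m, i ≠ i0 → ∀ y, trace y = 0 → N (EE i i0) y = 0 := by
    intro i hi y hy
    obtain ⟨t, ht0, hti⟩ : ∃ t : Fin m, t ≠ i0 ∧ t ≠ i := by
      by_cases h : i = i1
      · exact ⟨i2, h20, fun hh => h21 (hh.trans h)⟩
      · exact ⟨i1, h10, fun hh => h hh.symm⟩
    have e := Zbr _ (trace_EE_ne (Ne.symm hti)) (Zij i t hi ht0 (Ne.symm hti))
      (EE t i0) (trace_EE_ne ht0) y hy
    rw [lie_EE, if_neg (Ne.symm hi), if_pos rfl, zero_sub] at e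
    have hneg := hN.negl (EE i i0) y (trace_EE_ne hi) hy
    rw [hneg] at e
    exact neg_eq_zero.mp e
  have Zdiag : ∀ j : Fin m, j ≠ i0 → ∀ y, trace y = 0 → N (EE i0 i0 - EE j j) y = 0 := by
    intro j hj y hy
    have e := Zbr _ (trace_EE_ne hj) (Zi0 j hj) (EE i0 j) (trace_EE_ne (Ne.symm hj)) y hy
    rw [lie_EE, if_pos rfl, if_pos rfl] at e
    exact e
  refine ⟨lam, fun x y hx hy => ?_⟩
  have hx0 : N x y = 0 := by
    rw [hN.symm x y hx hy]
    refine killsecond y hy ?_ ?_ x hx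
    · intro p q hpq
      rw [hN.symm y (EE p q) hy (trace_EE_ne hpq)]
      by_cases hp0 : p = i0
      · have hq0 : q ≠ i0 := fun h => hpq (hp0.trans h.symm)
        rw [hp0]
        exact Z0j q hq0 y hy
      · by_cases hq0 : q = i0
        · rw [hq0]; exact Zi0 p hp0 y hy
        · exact Zij p q hp0 hq0 hpq y hy
    · intro t ht
      rw [hN.symm y _ hy (trace_EE_diff _ _)]
      have hsub : (EE t t : Matrix (Fin m) (Fin m) F) - EE i0 i0
          = -((EE i0 i0 : Matrix (Fin m) (Fin m) F) - EE t t) := (neg_sub _ _).symm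
      rw [hsub, hN.negl _ y (trace_EE_diff _ _) hy, Zdiag t ht y hy, neg_zero]
  have hfin := hx0
  rw [hNxy] at hfin
  exact sub_eq_zero.mp hfin

end MultOne


/-- Every automorphism `ψ` of the Lie algebra `Q⁰ = 𝔰𝔩(n+1,F)` extends to
an automorphism `φ` of the Lie superalgebra `Q = Q(n)`; i.e. the restriction map
`Aut(Q) → Aut(Q⁰)` is surjective. -/
theorem stmt_13 (F : Type*) [Field F] [IsAlgClosed F] (h2 : ringChar F ≠ 2)
    (n : ℕ) (hn : 2 ≤ n) (hchar : (n + 1 : F) ≠ 0)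
    (sharp : Matrix (Fin (n + 1)) (Fin (n + 1)) F → Matrix (Fin (n + 1)) (Fin (n + 1)) F)
    (hsharp : ∀ a, sharp a = a - ((n + 1 : F)⁻¹ * Matrix.trace a) • (1 : Matrix (Fin (n + 1)) (Fin (n + 1)) F))
    (B : QMat F n → QMat F n → QMat F n)
    (hB : ∀ p q, B p q = (p.1 * q.1 - q.1 * p.1 + sharp (p.2 * q.2 + q.2 * p.2),
      p.1 * q.2 - q.2 * p.1 + p.2 * q.1 - q.1 * p.2))
    -- ψ is an automorphism of the Lie algebra 𝔰𝔩(n+1,F):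
    (ψ : Matrix (Fin (n + 1)) (Fin (n + 1)) F → Matrix (Fin (n + 1)) (Fin (n + 1)) F)
    (hψadd : ∀ a b, ψ (a + b) = ψ a + ψ b) (hψsmul : ∀ (c : F) a, ψ (c • a) = c • ψ a)
    (hψsl : ∀ a, Matrix.trace a = 0 → Matrix.trace (ψ a) = 0)
    (hψsurj : ∀ b, Matrix.trace b = 0 → ∃ a, Matrix.trace a = 0 ∧ ψ a = b)
    (hψinj : ∀ a b, Matrix.trace a = 0 → Matrix.trace b = 0 → ψ a = ψ b → a = b)
    (hψbr : ∀ a b, Matrix.trace a = 0 → Matrix.trace b = 0 →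
      ψ (a * b - b * a) = ψ a * ψ b - ψ b * ψ a) :
    -- there is an automorphism φ of Q restricting to ψ on Q⁰:
    ∃ φ : QMat F n → QMat F n,
      (∀ p q, φ (p + q) = φ p + φ q) ∧ (∀ (c : F) p, φ (c • p) = c • φ p) ∧
      (∀ p : QMat F n, Matrix.trace p.1 = 0 → Matrix.trace p.2 = 0 →
        Matrix.trace (φ p).1 = 0 ∧ Matrix.trace (φ p).2 = 0) ∧
      (∀ q : QMat F n, Matrix.trace q.1 = 0 → Matrix.trace q.2 = 0 →
        ∃ p : QMat F n, Matrix.trace p.1 = 0 ∧ Matrix.trace p.2 = 0 ∧ φ p = q) ∧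
      (∀ p q : QMat F n, Matrix.trace p.1 = 0 → Matrix.trace p.2 = 0 →
        Matrix.trace q.1 = 0 → Matrix.trace q.2 = 0 → φ p = φ q → p = q) ∧
      (∀ a, Matrix.trace a = 0 → (φ (a, 0)).2 = 0) ∧
      (∀ x, Matrix.trace x = 0 → (φ (0, x)).1 = 0) ∧
      (∀ p q : QMat F n, Matrix.trace p.1 = 0 → Matrix.trace p.2 = 0 →
        Matrix.trace q.1 = 0 → Matrix.trace q.2 = 0 → φ (B p q) = B (φ p) (φ q)) ∧
      (∀ a, Matrix.trace a = 0 → φ (a, 0) = (ψ a, 0)) := by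
  classical
  have hm : 3 ≤ n + 1 := by omega
  have hcast : ((n+1:ℕ):F) = (n + 1 : F) := by push_cast; ring
  have hmF : ((n+1:ℕ):F) ≠ 0 := by rw [hcast]; exact hchar
  have h2F : (2:F) ≠ 0 := by
    intro h20
    have hdvd : ringChar F ∣ 2 := by
      have hc := (CharP.cast_eq_zero_iff F (ringChar F) 2)
      exact hc.mp (by exact_mod_cast h20)
    rcases (Nat.dvd_prime Nat.prime_two).mp hdvd with h | h
    · exact CharP.char_ne_one F (ringChar F) h
    · exact h2 h
  have ψ0 : ψ 0 = 0 := by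
    have := hψsmul 0 0
    simpa using this
  -- the Jordan product
  set Sf : Matrix (Fin (n+1)) (Fin (n+1)) F → Matrix (Fin (n+1)) (Fin (n+1)) F → Matrix (Fin (n+1)) (Fin (n+1)) F :=
    fun x y => sharp (x * y + y * x) with hSfdef
  have hSf : ∀ x y, Sf x y = x*y + y*x - (((n+1:ℕ):F)⁻¹ * Matrix.trace (x*y + y*x)) • (1 : Matrix (Fin (n+1)) (Fin (n+1)) F) := by
    intro x y
    rw [hSfdef]
    simp only []
    rw [hsharp, hcast]
  have hSIB := S_IBil hmF Sf hSf
  have trSf : ∀ x y, Matrix.trace (Sf x y) = 0 := by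
    intro x y
    rw [hSf, trace_sub, trace_smul, trace_one]
    simp only [Fintype.card_fin, smul_eq_mul]
    rw [mul_comm (((n+1:ℕ):F))⁻¹ _, mul_assoc, inv_mul_cancel₀ hmF]
    ring
  -- inverse of ψ on traceless matrices
  set ψinv : Matrix (Fin (n+1)) (Fin (n+1)) F → Matrix (Fin (n+1)) (Fin (n+1)) F :=
    fun b => if h : Matrix.trace b = 0 then (hψsurj b h).choose else 0 with hψinvdef
  have hinv1 : ∀ b, Matrix.trace b = 0 → Matrix.trace (ψinv b) = 0 := by
    intro b hb
    rw [hψinvdef]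
    simp only [dif_pos hb]
    exact (hψsurj b hb).choose_spec.1
  have hinv2 : ∀ b, Matrix.trace b = 0 → ψ (ψinv b) = b := by
    intro b hb
    rw [hψinvdef]
    simp only [dif_pos hb]
    exact (hψsurj b hb).choose_spec.2
  have hinvadd : ∀ b b', Matrix.trace b = 0 → Matrix.trace b' = 0 →
      ψinv (b + b') = ψinv b + ψinv b' := by
    intro b b' hb hb'
    have hbb' : Matrix.trace (b + b') = 0 := by rw [trace_add, hb, hb']; ring
    refine hψinj _ _ (hinv1 _ hbb') ?_ ?_
    · rw [trace_add, hinv1 b hb, hinv1 b' hb']; ring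
    · rw [hinv2 _ hbb', hψadd, hinv2 b hb, hinv2 b' hb']
  have hinvsmul : ∀ (r : F) b, Matrix.trace b = 0 → ψinv (r • b) = r • ψinv b := by
    intro r b hb
    have hrb : Matrix.trace (r • b) = 0 := by rw [trace_smul, hb, smul_zero]
    refine hψinj _ _ (hinv1 _ hrb) ?_ ?_
    · rw [trace_smul, hinv1 b hb, smul_zero]
    · rw [hinv2 _ hrb, hψsmul, hinv2 b hb]
  -- the transported product
  set T : Matrix (Fin (n+1)) (Fin (n+1)) F → Matrix (Fin (n+1)) (Fin (n+1)) F → Matrix (Fin (n+1)) (Fin (n+1)) F :=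
    fun x y => ψinv (Sf (ψ x) (ψ y)) with hTdef
  have hTxy : ∀ x y, T x y = ψinv (Sf (ψ x) (ψ y)) := fun _ _ => rfl
  have hT : IBil (n+1) F T := by
    constructor
    · intro x x' y hx hx' hy
      rw [hTxy, hTxy, hTxy, hψadd,
        hSIB.addl (ψ x) (ψ x') (ψ y) (hψsl x hx) (hψsl x' hx') (hψsl y hy),
        hinvadd _ _ (trSf _ _) (trSf _ _)]
    · intro r x y hx hy
      rw [hTxy, hTxy, hψsmul,
        hSIB.smull r (ψ x) (ψ y) (hψsl x hx) (hψsl y hy),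
        hinvsmul _ _ (trSf _ _)]
    · intro x y hx hy
      rw [hTxy, hTxy, hSIB.symm (ψ x) (ψ y) (hψsl x hx) (hψsl y hy)]
    · intro a x y ha hx hy
      have hM : Matrix.trace (Sf (ψ x) (ψ y)) = 0 := trSf _ _
      have hcomm : Matrix.trace (a * T x y - T x y * a) = 0 := by
        rw [trace_sub, Matrix.trace_mul_comm]; ring
      have lhs : a * T x y - T x y * a
          = ψinv (ψ a * Sf (ψ x) (ψ y) - Sf (ψ x) (ψ y) * ψ a) := by
        refine hψinj _ _ hcomm ?_ ?_
        · exact hinv1 _ (by rw [trace_sub, Matrix.trace_mul_comm]; ring)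
        · rw [hψbr a (T x y) ha (hinv1 _ hM), hTxy, hinv2 _ hM,
            hinv2 _ (by rw [trace_sub, Matrix.trace_mul_comm]; ring)]
      rw [lhs, hTxy, hTxy]
      have hbrx : ψ (a * x - x * a) = ψ a * ψ x - ψ x * ψ a := hψbr a x ha hx
      have hbry : ψ (a * y - y * a) = ψ a * ψ y - ψ y * ψ a := hψbr a y ha hy
      have htrbrx : Matrix.trace (ψ a * ψ x - ψ x * ψ a) = 0 := by
        rw [trace_sub, Matrix.trace_mul_comm]; ring
      have htrbry : Matrix.trace (ψ a * ψ y - ψ y * ψ a) = 0 := by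
        rw [trace_sub, Matrix.trace_mul_comm]; ring
      rw [hbrx, hbry]
      rw [← hinvadd _ _ (trSf _ _) (trSf _ _)]
      exact congrArg ψinv (hSIB.inv (ψ a) (ψ x) (ψ y) (hψsl a ha) (hψsl x hx) (hψsl y hy))
    · intro x y hx hy
      exact hinv1 _ (trSf _ _)
  obtain ⟨lam, hlamT⟩ := multOne hm h2F hmF Sf T hSf hT
  -- lam is nonzero
  obtain ⟨j0, j1, j2, g01, g02, g12⟩ :
      ∃ a b c : Fin (n+1), a ≠ b ∧ a ≠ c ∧ b ≠ c :=
    ⟨⟨0, by omega⟩, ⟨1, by omega⟩, ⟨2, by omega⟩,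
      by simp [Fin.ext_iff], by simp [Fin.ext_iff], by simp [Fin.ext_iff]⟩
  have hSval : Sf (EE j0 j1) (EE j1 j2) = (EE j0 j2 : Matrix (Fin (n+1)) (Fin (n+1)) F) := by
    rw [hSf, EE_mul, EE_mul, if_pos rfl, if_neg (Ne.symm g02), add_zero,
      trace_EE_ne g02, mul_zero, zero_smul, sub_zero]
  have KEY : ∀ x y, Matrix.trace x = 0 → Matrix.trace y = 0 →
      Sf (ψ x) (ψ y) = lam • ψ (Sf x y) := by
    intro x y hx hy
    have h1 : Sf (ψ x) (ψ y) = ψ (T x y) := (hinv2 _ (trSf _ _)).symm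
    rw [h1, hlamT x y hx hy, hψsmul]
  have hlam0 : lam ≠ 0 := by
    intro h0
    have e := KEY (ψinv (EE j0 j1)) (ψinv (EE j1 j2))
      (hinv1 _ (trace_EE_ne g01)) (hinv1 _ (trace_EE_ne g12))
    rw [hinv2 _ (trace_EE_ne g01), hinv2 _ (trace_EE_ne g12), h0, zero_smul, hSval] at e
    have := congrArg (fun M : Matrix (Fin (n+1)) (Fin (n+1)) F => M j0 j2) e
    simp [EE_apply] at this
  obtain ⟨c, hc⟩ := IsAlgClosed.exists_pow_nat_eq (lam⁻¹) (n := 2) (by norm_num)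
  have hc0 : c ≠ 0 := by
    intro h0
    rw [h0] at hc
    exact inv_ne_zero hlam0 (by simpa using hc.symm)
  have KEY2 : ∀ x y, Matrix.trace x = 0 → Matrix.trace y = 0 →
      (c^2) • Sf (ψ x) (ψ y) = ψ (Sf x y) := by
    intro x y hx hy
    rw [KEY x y hx hy, smul_smul, hc, inv_mul_cancel₀ hlam0, one_smul]
  -- sharp is homogeneous
  have hsharpsmul : ∀ (r : F) a, sharp (r • a) = r • sharp a := by
    intro r a
    rw [hsharp, hsharp, trace_smul, smul_sub, smul_smul]
    congr 2
    simp only [smul_eq_mul]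
    ring
  -- the automorphism
  refine ⟨fun p => (ψ p.1, c • ψ p.2), ?_, ?_, ?_, ?_, ?_, ?_, ?_, ?_, ?_⟩
  · intro p q
    refine Prod.ext ?_ ?_
    · simp only [Prod.fst_add]
      exact hψadd p.1 q.1
    · simp only [Prod.snd_add]
      rw [hψadd, smul_add]
  · intro r p
    refine Prod.ext ?_ ?_
    · simp only [Prod.smul_fst, Prod.fst]
      exact hψsmul r p.1
    · simp only [Prod.smul_snd]
      rw [hψsmul, smul_comm r c]
  · intro p hp1 hp2
    exact ⟨hψsl p.1 hp1, by rw [trace_smul, hψsl p.2 hp2, smul_zero]⟩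
  · intro q hq1 hq2
    refine ⟨(ψinv q.1, c⁻¹ • ψinv q.2), hinv1 _ hq1, ?_, ?_⟩
    · rw [trace_smul, hinv1 _ hq2, smul_zero]
    · refine Prod.ext ?_ ?_
      · exact hinv2 _ hq1
      · simp only []
        rw [hψsmul, smul_smul, mul_inv_cancel₀ hc0, one_smul, hinv2 _ hq2]
  · intro p q hp1 hp2 hq1 hq2 hpq
    have e1 : ψ p.1 = ψ q.1 := congrArg Prod.fst hpq
    have e2 : c • ψ p.2 = c • ψ q.2 := congrArg Prod.snd hpq
    refine Prod.ext (hψinj _ _ hp1 hq1 e1) (hψinj _ _ hp2 hq2 (smul_right_injective _ hc0 e2))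
  · intro a _
    simp only [ψ0, smul_zero]
  · intro x _
    simp only [ψ0]
  · intro p q hp1 hp2 hq1 hq2
    rw [hB, hB]
    refine Prod.ext ?_ ?_
    · simp only []
      have harg : p.1 * q.1 - q.1 * p.1 + sharp (p.2 * q.2 + q.2 * p.2)
          = (p.1 * q.1 - q.1 * p.1) + Sf p.2 q.2 := rfl
      rw [harg, hψadd, hψbr p.1 q.1 hp1 hq1, ← KEY2 p.2 q.2 hp2 hq2]
      have hmulsm : (c • ψ p.2) * (c • ψ q.2) + (c • ψ q.2) * (c • ψ p.2)
          = (c^2) • (ψ p.2 * ψ q.2 + ψ q.2 * ψ p.2) := by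
        rw [smul_mul_assoc, mul_smul_comm, smul_mul_assoc, mul_smul_comm,
          smul_smul, smul_smul, ← smul_add, ← pow_two]
      rw [hmulsm]
      have : sharp ((c^2) • (ψ p.2 * ψ q.2 + ψ q.2 * ψ p.2))
          = (c^2) • Sf (ψ p.2) (ψ q.2) := hsharpsmul _ _
      rw [this]
    · simp only []
      have harg : p.1 * q.2 - q.2 * p.1 + p.2 * q.1 - q.1 * p.2
          = (p.1 * q.2 - q.2 * p.1) + (p.2 * q.1 - q.1 * p.2) := by abel
      rw [harg, hψadd, hψbr p.1 q.2 hp1 hq2, hψbr p.2 q.1 hp2 hq1]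
      rw [mul_smul_comm, smul_mul_assoc, smul_mul_assoc, mul_smul_comm,
        smul_add, smul_sub, smul_sub]
      abel
  · intro a _
    refine Prod.ext rfl ?_
    simp only [ψ0, smul_zero]
end

section
/- Let F be algebraically closed with char F ≠ 2, char F ∤ n+1, n ≥ 2. For every automorphism φ of the Lie superalgebra Q = Q(n) there is a scalar λ ∈ F^× with λ⁴ = 1 such that φ(x̲) = λ·(φ(x))̲ for all x ∈ Q⁰, where x ↦ x̲ is the standard isomorphism Q⁰ → Q¹. -/
open Matrix

section Schur
variable {F : Type*} [Field F] {n : ℕ}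

private lemma exists_diag (h2 : (2:F) ≠ 0) (hchar : ((n:F)+1) ≠ 0)
    {i j k l : Fin (n+1)} (hij : i ≠ j) (hkl : ¬(k = i ∧ l = j)) :
    ∃ d : Fin (n+1) → F, (∑ t, d t) = 0 ∧ d k - d l ≠ d i - d j := by
  classical
  set δ : Fin (n+1) → Fin (n+1) → F := fun a b => if a = b then 1 else 0 with hδ
  have hδsymm : ∀ a b, δ a b = δ b a := by
    intro a b
    by_cases h : a = b
    · simp [hδ, h]
    · simp [hδ, h, Ne.symm h]
  have hδsum : ∀ a, (∑ t, δ t a) = 1 := by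
    intro a; simp [hδ]
  set v : Fin (n+1) → F := fun t => δ t k - δ t l - δ t i + δ t j with hv
  by_cases hconst : ∀ p, v p = v i
  · exfalso
    have hsum : (∑ t, v t) = 0 := by
      simp only [hv, Finset.sum_add_distrib, Finset.sum_sub_distrib, hδsum]
      ring
    have hni : ((n:F)+1) * v i = 0 := by
      have hc : (∑ _t : Fin (n+1), v i) = ((n:F)+1) * v i := by
        rw [Finset.sum_const, Finset.card_univ, Fintype.card_fin, nsmul_eq_mul]
        push_cast; ring
      rw [← hsum, Finset.sum_congr rfl fun p _ => hconst p, hc]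
    have hvi0 : v i = 0 := by
      rcases mul_eq_zero.mp hni with h | h
      · exact absurd h hchar
      · exact h
    have hall : ∀ t, v t = 0 := fun t => (hconst t).trans hvi0
    have h1 := hall i
    have h2' := hall j
    have hδii : δ i i = 1 := by simp [hδ]
    have hδij : δ i j = 0 := by simp [hδ, hij]
    have hδji : δ j i = 0 := by simp [hδ, Ne.symm hij]
    have hδjj : δ j j = 1 := by simp [hδ]
    rw [hv] at h1 h2'
    simp only [hδii, hδij, hδji, hδjj] at h1 h2'
    -- h1 : δ i k - δ i l - 1 + 0 = 0 ; h2' : δ j k - δ j l - 0 + 1 = 0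
    have hik : i = k := by
      by_cases hik : i = k
      · exact hik
      exfalso
      have hδik : δ i k = 0 := by simp [hδ, hik]
      by_cases hil : i = l
      · have hδil : δ i l = 1 := by simp [hδ, hil]
        rw [hδik, hδil] at h1
        exact h2 (by linear_combination -h1)
      · have hδil : δ i l = 0 := by simp [hδ, hil]
        rw [hδik, hδil] at h1
        exact one_ne_zero (α := F) (by linear_combination -h1)
    have hjl : j = l := by
      by_cases hjl : j = l
      · exact hjl
      exfalso
      have hδjl : δ j l = 0 := by simp [hδ, hjl]
      by_cases hjk : j = k
      · have hδjk : δ j k = 1 := by simp [hδ, hjk]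
        rw [hδjk, hδjl] at h2'
        exact h2 (by linear_combination h2')
      · have hδjk : δ j k = 0 := by simp [hδ, hjk]
        rw [hδjk, hδjl] at h2'
        exact one_ne_zero (α := F) (by linear_combination h2')
    exact hkl ⟨hik.symm, hjl.symm⟩
  · push_neg at hconst
    obtain ⟨p, hpq⟩ := hconst
    refine ⟨fun t => δ t p - δ t i, ?_, ?_⟩
    · simp only [Finset.sum_sub_distrib, hδsum]
      ring
    · intro hcon
      have e : v p - v i = ((δ k p - δ k i) - (δ l p - δ l i)) - ((δ i p - δ i i) - (δ j p - δ j i)) := by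
        simp only [hv]
        rw [hδsymm k p, hδsymm l p, hδsymm i p, hδsymm j p,
          hδsymm k i, hδsymm l i, hδsymm j i]
        ring
      rw [hcon] at e
      exact hpq (by linear_combination e)
end Schur

section MainId
variable {F : Type*} [Field F] {n : ℕ}

private noncomputable def sharpD (M : Matrix (Fin (n+1)) (Fin (n+1)) F) :
    Matrix (Fin (n+1)) (Fin (n+1)) F :=
  M - (((n:F)+1)⁻¹ * trace M) • 1

private noncomputable def PD (a b : Matrix (Fin (n+1)) (Fin (n+1)) F) :
    Matrix (Fin (n+1)) (Fin (n+1)) F :=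
  sharpD (a * b + b * a)

private lemma trace_sharpD (hchar : ((n:F)+1) ≠ 0) (M : Matrix (Fin (n+1)) (Fin (n+1)) F) :
    trace (sharpD M) = 0 := by
  simp only [sharpD, Matrix.trace_sub, Matrix.trace_smul, Matrix.trace_one, smul_eq_mul]
  rw [Fintype.card_fin]
  push_cast
  field_simp
  simp

private lemma trace_PD (hchar : ((n:F)+1) ≠ 0) (a b : Matrix (Fin (n+1)) (Fin (n+1)) F) :
    trace (PD a b) = 0 := trace_sharpD hchar _

private lemma sharpD_eq_self {M : Matrix (Fin (n+1)) (Fin (n+1)) F} (h : trace M = 0) :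
    sharpD M = M := by
  simp [sharpD, h]

private lemma sharpD_add (M N : Matrix (Fin (n+1)) (Fin (n+1)) F) :
    sharpD (M + N) = sharpD M + sharpD N := by
  simp only [sharpD, Matrix.trace_add]
  module

private lemma sharpD_smul (r : F) (M : Matrix (Fin (n+1)) (Fin (n+1)) F) :
    sharpD (r • M) = r • sharpD M := by
  simp only [sharpD, Matrix.trace_smul, smul_eq_mul]
  module

private lemma PD_smul_left (r : F) (a b : Matrix (Fin (n+1)) (Fin (n+1)) F) :
    PD (r • a) b = r • PD a b := by
  simp only [PD, smul_mul_assoc, mul_smul_comm, ← smul_add, sharpD_smul]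

private lemma PD_smul_right (r : F) (a b : Matrix (Fin (n+1)) (Fin (n+1)) F) :
    PD a (r • b) = r • PD a b := by
  simp only [PD, smul_mul_assoc, mul_smul_comm, ← smul_add, sharpD_smul]

private lemma main_id (x y : Matrix (Fin (n+1)) (Fin (n+1)) F)
    (hx : trace x = 0) (hy : trace y = 0) :
    PD x (PD x y) = (2:F) • PD (sharpD (x*x)) y
      - (x*(x*y - y*x) - (x*y - y*x)*x)
      + ((4:F) * (((n:F)+1)⁻¹ * trace (x*x))) • y
      - ((2:F) * (((n:F)+1)⁻¹ * trace (x*y + y*x))) • x := by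
  have h1 : trace (y*x) = trace (x*y) := Matrix.trace_mul_comm y x
  have h2 : trace (x*(y*x)) = trace (x*(x*y)) := by
    rw [← mul_assoc]
    exact Matrix.trace_mul_comm (x*y) x
  have h6 : trace (y*(x*x)) = trace (x*(x*y)) := by
    rw [Matrix.trace_mul_comm y (x*x), mul_assoc]
  simp only [PD, sharpD]
  simp only [mul_add, add_mul, mul_sub, sub_mul, mul_smul_comm, smul_mul_assoc, mul_one, one_mul,
    mul_assoc, smul_smul]
  simp only [Matrix.trace_add, Matrix.trace_sub, Matrix.trace_smul, smul_eq_mul, hx, hy,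
    mul_zero, sub_zero, add_zero, zero_sub, h1, h2, h6]
  module

end MainId

section Schur
variable {F : Type*} [Field F] {n : ℕ}

private lemma schur_scalar (h2 : (2:F) ≠ 0) (hn : 2 ≤ n) (hchar : ((n:F)+1) ≠ 0)
    (exists_diag : ∀ {i j k l : Fin (n+1)}, i ≠ j → ¬(k = i ∧ l = j) →
      ∃ d : Fin (n+1) → F, (∑ t, d t) = 0 ∧ d k - d l ≠ d i - d j)
    (S : Matrix (Fin (n+1)) (Fin (n+1)) F → Matrix (Fin (n+1)) (Fin (n+1)) F)
    (Sadd : ∀ a b, trace a = 0 → trace b = 0 → S (a + b) = S a + S b)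
    (Ssmul : ∀ (r : F) a, trace a = 0 → S (r • a) = r • S a)
    (Scomm : ∀ a m, trace a = 0 → trace m = 0 → S (a * m - m * a) = a * S m - S m * a) :
    ∃ c : F, ∀ m, trace m = 0 → S m = c • m := by
  classical
  have S0 : S 0 = 0 := by simpa using Ssmul 0 0 (by simp)
  have traceE : ∀ (i j : Fin (n+1)), i ≠ j → trace (single i j (1:F)) = 0 := by
    intro i j h
    exact Matrix.trace_single_eq_of_ne i j 1 h
  have hdiagE : ∀ (d : Fin (n+1) → F) (i j : Fin (n+1)),
      diagonal d * single i j (1:F) - single i j 1 * diagonal d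
        = (d i - d j) • single i j (1:F) := by
    intro d i j
    ext p q
    by_cases hp : i = p <;> by_cases hq : j = q <;>
      simp [Matrix.diagonal_mul, Matrix.mul_diagonal, Matrix.single, Matrix.of_apply,
        hp, hq] <;> ring
  -- Step B
  have SE : ∀ i j : Fin (n+1), i ≠ j →
      S (single i j 1) = (S (single i j 1) i j) • single i j (1:F) := by
    intro i j hij
    ext k l
    by_cases hkl : k = i ∧ l = j
    · obtain ⟨rfl, rfl⟩ := hkl; simp
    · have hzero : S (single i j (1:F)) k l = 0 := by
        obtain ⟨d, hd0, hdne⟩ := exists_diag hij hkl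
        have h1 := Scomm (diagonal d) (single i j 1)
          (by simpa [Matrix.trace_diagonal] using hd0) (traceE i j hij)
        rw [hdiagE, Ssmul _ _ (traceE i j hij)] at h1
        have h2' := congrFun (congrFun h1 k) l
        simp only [Matrix.smul_apply, Matrix.sub_apply, Matrix.diagonal_mul,
          Matrix.mul_diagonal, smul_eq_mul] at h2'
        have hfac : (d i - d j - (d k - d l)) * S (single i j 1) k l = 0 := by
          linear_combination h2'
        rcases mul_eq_zero.mp hfac with h | h
        · exact absurd (by linear_combination -h) hdne
        · exact h
      have hkl' : ¬(i = k ∧ j = l) := fun ⟨ha, hb⟩ => hkl ⟨ha.symm, hb.symm⟩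
      rw [hzero, Matrix.smul_apply, Matrix.single_apply_of_ne i j 1 k l hkl', smul_zero]
  have R1 : ∀ i j k : Fin (n+1), i ≠ j → j ≠ k → i ≠ k →
      S (single i k 1) i k = S (single j k 1) j k := by
    intro i j k hij hjk hik
    have mz : single j k (1:F) * single i j 1 = 0 := by
      apply Matrix.single_mul_single_of_ne
      exact Ne.symm hik
    have h1 := Scomm (single i j 1) (single j k 1) (traceE _ _ hij) (traceE _ _ hjk)
    rw [SE j k hjk] at h1
    rw [mul_smul_comm, smul_mul_assoc] at h1
    simp only [Matrix.single_mul_single_same, mz, one_mul, smul_zero, sub_zero] at h1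
    have h3 := congrFun (congrFun h1 i) k
    simpa using h3
  have R2 : ∀ i j k : Fin (n+1), i ≠ j → j ≠ k → i ≠ k →
      S (single i k 1) i k = S (single i j 1) i j := by
    intro i j k hij hjk hik
    have mz : single j k (1:F) * single i j 1 = 0 := by
      apply Matrix.single_mul_single_of_ne
      exact Ne.symm hik
    have h1 := Scomm (single j k 1) (single i j 1) (traceE _ _ hjk) (traceE _ _ hij)
    rw [SE i j hij] at h1
    rw [mul_smul_comm, smul_mul_assoc] at h1
    simp only [Matrix.single_mul_single_same, mz, one_mul, smul_zero, zero_sub] at h1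
    have hneg : S (-(single i k (1:F))) = - S (single i k 1) := by
      have := Ssmul (-1) (single i k 1) (traceE _ _ hik)
      simpa [neg_smul, one_smul] using this
    rw [hneg] at h1
    have h2' : S (single i k 1) = (S (single i j 1) i j) • single i k 1 := by
      have := neg_injective h1
      simpa using this
    have h3 := congrFun (congrFun h2' i) k
    simpa using h3
  have exists_third : ∀ i j : Fin (n+1), ∃ k : Fin (n+1), k ≠ i ∧ k ≠ j := by
    intro i j
    by_contra h
    push_neg at h
    have hsub : (Finset.univ : Finset (Fin (n+1))) ⊆ {i, j} := by
      intro k _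
      simp only [Finset.mem_insert, Finset.mem_singleton]
      rcases eq_or_ne k i with h' | h'
      · exact Or.inl h'
      · exact Or.inr (h k h')
    have hle := Finset.card_le_card hsub
    have h2c : ({i, j} : Finset (Fin (n+1))).card ≤ 2 := by
      apply le_trans (Finset.card_insert_le _ _)
      simp
    rw [Finset.card_univ, Fintype.card_fin] at hle
    omega
  have csymm : ∀ i j : Fin (n+1), i ≠ j →
      S (single i j 1) i j = S (single j i 1) j i := by
    intro i j hij
    obtain ⟨k, hki, hkj⟩ := exists_third i j
    have e1 := R2 i j k hij (Ne.symm hkj) (Ne.symm hki)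
    have e2 := R1 i j k hij (Ne.symm hkj) (Ne.symm hki)
    have e3 := R2 j i k (Ne.symm hij) (Ne.symm hki) (Ne.symm hkj)
    rw [← e1, e2, e3]
  have call' : ∀ i j k l : Fin (n+1), i ≠ j → k ≠ l →
      S (single i j 1) i j = S (single k l 1) k l := by
    intro i j k l hij hkl
    by_cases hjl : j = l
    · subst hjl
      by_cases hik : i = k
      · subst hik; rfl
      · exact R1 i k j hik hkl hij
    · by_cases hil : i = l
      · subst hil
        rw [csymm i j hij]
        by_cases hjk : j = k
        · subst hjk; rfl
        · exact R1 j k i hjk hkl (Ne.symm hij)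
      · have e1 := (R2 i j l hij hjl hil).symm
        rw [e1]
        by_cases hik : i = k
        · subst hik; rfl
        · exact R1 i k l hik hkl hil
  set i0 : Fin (n+1) := ⟨0, by omega⟩ with hi0
  set i1 : Fin (n+1) := ⟨1, by omega⟩ with hi1
  have h01 : i0 ≠ i1 := by simp [hi0, hi1, Fin.ext_iff]
  set c : F := S (single i0 i1 1) i0 i1 with hcdef
  have SD : ∀ i j : Fin (n+1), i ≠ j →
      S (single i i 1 - single j j 1)
        = c • (single i i 1 - single j j 1) := by
    intro i j hij
    have htr : trace (single j i (1:F)) = 0 := traceE _ _ (Ne.symm hij)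
    have h1 := Scomm (single i j 1) (single j i 1) (traceE _ _ hij) htr
    rw [SE j i (Ne.symm hij)] at h1
    rw [mul_smul_comm, smul_mul_assoc] at h1
    simp only [Matrix.single_mul_single_same, one_mul] at h1
    rw [← smul_sub] at h1
    rw [call' j i i0 i1 (Ne.symm hij) h01] at h1
    exact h1
  have Ssum : ∀ (s : Finset (Fin (n+1) × Fin (n+1)))
      (f : Fin (n+1) × Fin (n+1) → Matrix (Fin (n+1)) (Fin (n+1)) F),
      (∀ p ∈ s, trace (f p) = 0) → S (∑ p ∈ s, f p) = ∑ p ∈ s, S (f p) := by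
    intro s
    induction s using Finset.induction with
    | empty => intro f _; simpa using S0
    | @insert a s ha ih =>
      intro f hf
      rw [Finset.sum_insert ha, Finset.sum_insert ha,
        Sadd _ _ (hf a (Finset.mem_insert_self a s)) ?_, ih f (fun p hp => hf p (Finset.mem_insert_of_mem hp))]
      rw [Matrix.trace_sum]
      exact Finset.sum_eq_zero (fun p hp => hf p (Finset.mem_insert_of_mem hp))
  refine ⟨c, ?_⟩
  intro m hm
  set f : Fin (n+1) × Fin (n+1) → Matrix (Fin (n+1)) (Fin (n+1)) F := fun p =>
    if p.1 = p.2 then m p.1 p.1 • (single p.1 p.1 1 - single i0 i0 1)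
    else m p.1 p.2 • single p.1 p.2 1 with hf
  have hfeq : ∀ p : Fin (n+1) × Fin (n+1),
      f p = single p.1 p.2 (m p.1 p.2)
        - (if p.1 = p.2 then m p.1 p.1 • single i0 i0 1 else 0) := by
    rintro ⟨a, b⟩
    by_cases h : a = b
    · subst h
      simp [hf, smul_sub, Matrix.smul_single]
    · simp [hf, h, Matrix.smul_single]
  have hdecomp : (∑ p : Fin (n+1) × Fin (n+1), f p) = m := by
    rw [Finset.sum_congr rfl (fun p _ => hfeq p), Finset.sum_sub_distrib]
    have e1 : (∑ p : Fin (n+1) × Fin (n+1), single p.1 p.2 (m p.1 p.2)) = m := by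
      rw [Fintype.sum_prod_type]
      exact (matrix_eq_sum_single m).symm
    have e2 : (∑ p : Fin (n+1) × Fin (n+1),
        (if p.1 = p.2 then m p.1 p.1 • single i0 i0 (1:F) else 0)) = 0 := by
      rw [Fintype.sum_prod_type]
      have heach : ∀ i : Fin (n+1), (∑ j : Fin (n+1),
          (if i = j then m i i • single i0 i0 (1:F) else 0)) = m i i • single i0 i0 1 := by
        intro i
        rw [Finset.sum_ite_eq]
        simp
      rw [Finset.sum_congr rfl (fun i _ => heach i), ← Finset.sum_smul]
      have htr : (∑ i : Fin (n+1), m i i) = trace m := rfl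
      rw [htr, hm, zero_smul]
    rw [e1, e2, sub_zero]
  have htrf : ∀ p : Fin (n+1) × Fin (n+1), trace (f p) = 0 := by
    rintro ⟨a, b⟩
    by_cases h : a = b
    · subst h
      simp only [hf, if_pos rfl]
      rw [Matrix.trace_smul, Matrix.trace_sub, Matrix.trace_single_eq_same,
        Matrix.trace_single_eq_same, sub_self, smul_zero]
    · simp only [hf, if_neg h]
      rw [Matrix.trace_smul, Matrix.trace_single_eq_of_ne a b 1 h, smul_zero]
  have hSf : ∀ p : Fin (n+1) × Fin (n+1), S (f p) = c • f p := by
    rintro ⟨a, b⟩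
    by_cases h : a = b
    · subst h
      simp only [hf, if_pos rfl]
      rw [Ssmul _ _ (by rw [Matrix.trace_sub, Matrix.trace_single_eq_same,
        Matrix.trace_single_eq_same, sub_self])]
      by_cases h0 : a = i0
      · subst h0
        simp [S0]
      · rw [SD a i0 h0, smul_comm]
    · simp only [hf, if_neg h]
      rw [Ssmul _ _ (traceE _ _ h), SE _ _ h, call' a b i0 i1 h h01, smul_comm]
  calc S m = S (∑ p : Fin (n+1) × Fin (n+1), f p) := by rw [hdecomp]
    _ = ∑ p : Fin (n+1) × Fin (n+1), S (f p) := Ssum _ _ (fun p _ => htrf p)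
    _ = ∑ p : Fin (n+1) × Fin (n+1), c • f p := Finset.sum_congr rfl (fun p _ => hSf p)
    _ = c • ∑ p : Fin (n+1) × Fin (n+1), f p := by rw [Finset.smul_sum]
    _ = c • m := by rw [hdecomp]
end Schur
set_option maxHeartbeats 2000000 in
/-- For every automorphism `φ` of the Lie superalgebra `Q = Q(n)` there is
`λ ∈ F^×` with `λ⁴ = 1` such that `φ(x̲) = λ·(φ(x))̲` for all `x ∈ Q⁰`. -/
theorem stmt_14 (F : Type*) [Field F] [IsAlgClosed F] (h2 : ringChar F ≠ 2)
    (n : ℕ) (hn : 2 ≤ n) (hchar : (n + 1 : F) ≠ 0)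
    (sharp : Matrix (Fin (n + 1)) (Fin (n + 1)) F → Matrix (Fin (n + 1)) (Fin (n + 1)) F)
    (hsharp : ∀ a, sharp a = a - ((n + 1 : F)⁻¹ * Matrix.trace a) • (1 : Matrix (Fin (n + 1)) (Fin (n + 1)) F))
    (B : QMat F n → QMat F n → QMat F n)
    (hB : ∀ p q, B p q = (p.1 * q.1 - q.1 * p.1 + sharp (p.2 * q.2 + q.2 * p.2),
      p.1 * q.2 - q.2 * p.1 + p.2 * q.1 - q.1 * p.2))
    -- φ is an automorphism of Q:
    (φ : QMat F n →ₗ[F] QMat F n)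
    (hφQ : ∀ p : QMat F n, Matrix.trace p.1 = 0 → Matrix.trace p.2 = 0 →
      Matrix.trace (φ p).1 = 0 ∧ Matrix.trace (φ p).2 = 0)
    (hφsurj : ∀ q : QMat F n, Matrix.trace q.1 = 0 → Matrix.trace q.2 = 0 →
      ∃ p : QMat F n, Matrix.trace p.1 = 0 ∧ Matrix.trace p.2 = 0 ∧ φ p = q)
    (hφinj : ∀ p q : QMat F n, Matrix.trace p.1 = 0 → Matrix.trace p.2 = 0 →
      Matrix.trace q.1 = 0 → Matrix.trace q.2 = 0 → φ p = φ q → p = q)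
    (hφeven : ∀ a : Matrix (Fin (n + 1)) (Fin (n + 1)) F, Matrix.trace a = 0 → (φ (a, 0)).2 = 0)
    (hφodd : ∀ x : Matrix (Fin (n + 1)) (Fin (n + 1)) F, Matrix.trace x = 0 → (φ (0, x)).1 = 0)
    (hφbr : ∀ p q : QMat F n, Matrix.trace p.1 = 0 → Matrix.trace p.2 = 0 →
      Matrix.trace q.1 = 0 → Matrix.trace q.2 = 0 → φ (B p q) = B (φ p) (φ q)) :
    ∃ lam : F, lam ≠ 0 ∧ lam ^ 4 = 1 ∧
      ∀ x : Matrix (Fin (n + 1)) (Fin (n + 1)) F, Matrix.trace x = 0 →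
        φ (0, x) = (0, lam • (φ (x, 0)).1) := by
  classical
  have h2' : (2:F) ≠ 0 := Ring.two_ne_zero h2
  have hsharp0 : sharp 0 = 0 := by rw [hsharp]; simp
  have hsharpD : ∀ a, sharp a = sharpD a := by
    intro a; rw [hsharp a]; rfl
  set ψ : Matrix (Fin (n+1)) (Fin (n+1)) F → Matrix (Fin (n+1)) (Fin (n+1)) F :=
    fun a => (φ (a, 0)).1 with hψdef
  set θ : Matrix (Fin (n+1)) (Fin (n+1)) F → Matrix (Fin (n+1)) (Fin (n+1)) F :=
    fun x => (φ (0, x)).2 with hθdef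
  -- linearity
  have hψadd : ∀ a b, ψ (a + b) = ψ a + ψ b := by
    intro a b
    have h := φ.map_add (a, 0) (b, 0)
    have e : ((a, 0) : QMat F n) + (b, 0) = (a + b, 0) := by simp
    rw [e] at h
    simpa using congrArg Prod.fst h
  have hψsub : ∀ a b, ψ (a - b) = ψ a - ψ b := by
    intro a b
    have h := φ.map_sub (a, 0) (b, 0)
    have e : ((a, 0) : QMat F n) - (b, 0) = (a - b, 0) := by simp
    rw [e] at h
    simpa using congrArg Prod.fst h
  have hψsmul : ∀ (r : F) a, ψ (r • a) = r • ψ a := by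
    intro r a
    have h := φ.map_smul r (a, 0)
    have e : r • ((a, 0) : QMat F n) = (r • a, 0) := by simp
    rw [e] at h
    simpa using congrArg Prod.fst h
  have hθadd : ∀ a b, θ (a + b) = θ a + θ b := by
    intro a b
    have h := φ.map_add (0, a) (0, b)
    have e : ((0, a) : QMat F n) + (0, b) = (0, a + b) := by simp
    rw [e] at h
    simpa using congrArg Prod.snd h
  have hθsmul : ∀ (r : F) a, θ (r • a) = r • θ a := by
    intro r a
    have h := φ.map_smul r (0, a)
    have e : r • ((0, a) : QMat F n) = (0, r • a) := by simp
    rw [e] at h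
    simpa using congrArg Prod.snd h
  -- parity
  have heven : ∀ a, trace a = 0 → φ (a, 0) = (ψ a, 0) :=
    fun a ha => Prod.ext rfl (hφeven a ha)
  have hodd : ∀ x, trace x = 0 → φ (0, x) = (0, θ x) :=
    fun x hx => Prod.ext (hφodd x hx) rfl
  -- traces
  have hψtr : ∀ a, trace a = 0 → trace (ψ a) = 0 :=
    fun a ha => (hφQ (a, 0) ha (by simp)).1
  have hθtr : ∀ x, trace x = 0 → trace (θ x) = 0 :=
    fun x hx => (hφQ (0, x) (by simp) hx).2
  -- bracket relations
  have hψbr : ∀ a b, trace a = 0 → trace b = 0 →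
      ψ (a * b - b * a) = ψ a * ψ b - ψ b * ψ a := by
    intro a b ha hb
    have h := hφbr (a, 0) (b, 0) ha (by simp) hb (by simp)
    rw [hB, hB, heven a ha, heven b hb] at h
    simp only [mul_zero, zero_mul, add_zero, zero_add, sub_zero, zero_sub, neg_zero,
      hsharp0, sub_self] at h
    simpa using congrArg Prod.fst h
  have hmix : ∀ a x, trace a = 0 → trace x = 0 →
      θ (a * x - x * a) = ψ a * θ x - θ x * ψ a := by
    intro a x ha hx
    have h := hφbr (a, 0) (0, x) ha (by simp) (by simp) hx
    rw [hB, hB, heven a ha, hodd x hx] at h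
    simp only [mul_zero, zero_mul, add_zero, zero_add, sub_zero, zero_sub, neg_zero,
      hsharp0, sub_self] at h
    simpa using congrArg Prod.snd h
  have hoddbr : ∀ x y, trace x = 0 → trace y = 0 →
      ψ (sharpD (x * y + y * x)) = sharpD (θ x * θ y + θ y * θ x) := by
    intro x y hx hy
    have h := hφbr (0, x) (0, y) (by simp) hx (by simp) hy
    rw [hB, hB, hodd x hx, hodd y hy] at h
    simp only [mul_zero, zero_mul, add_zero, zero_add, sub_zero, zero_sub, neg_zero,
      sub_self, hsharpD] at h
    simpa using congrArg Prod.fst h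
  -- surjectivity and injectivity on traceless part
  have hψsurj : ∀ b, trace b = 0 → ∃ a, trace a = 0 ∧ ψ a = b := by
    intro b hb
    obtain ⟨p, hp1, hp2, hp⟩ := hφsurj (b, 0) hb (by simp)
    have hsplit : φ (p.1, 0) + φ (0, p.2) = (b, 0) := by
      rw [← φ.map_add]
      have : ((p.1, 0) : QMat F n) + (0, p.2) = p := by simp
      rw [this, hp]
    rw [heven p.1 hp1, hodd p.2 hp2] at hsplit
    refine ⟨p.1, hp1, ?_⟩
    have := congrArg Prod.fst hsplit
    simpa using this
  have hθsurj : ∀ b, trace b = 0 → ∃ x, trace x = 0 ∧ θ x = b := by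
    intro b hb
    obtain ⟨p, hp1, hp2, hp⟩ := hφsurj (0, b) (by simp) hb
    have hsplit : φ (p.1, 0) + φ (0, p.2) = (0, b) := by
      rw [← φ.map_add]
      have : ((p.1, 0) : QMat F n) + (0, p.2) = p := by simp
      rw [this, hp]
    rw [heven p.1 hp1, hodd p.2 hp2] at hsplit
    refine ⟨p.2, hp2, ?_⟩
    have := congrArg Prod.snd hsplit
    simpa using this
  have hψinj : ∀ a b, trace a = 0 → trace b = 0 → ψ a = ψ b → a = b := by
    intro a b ha hb hab
    have h := hφinj (a, 0) (b, 0) ha (by simp) hb (by simp) ?_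
    · simpa using congrArg Prod.fst h
    · rw [heven a ha, heven b hb, hab]
  -- the Schur operator
  set S : Matrix (Fin (n+1)) (Fin (n+1)) F → Matrix (Fin (n+1)) (Fin (n+1)) F :=
    fun m => if hm : trace m = 0 then θ ((hψsurj m hm).choose) else 0 with hSdef
  have hSval : ∀ m (hm : trace m = 0), S m = θ ((hψsurj m hm).choose) := by
    intro m hm
    simp only [hSdef, dif_pos hm]
  have hchoosetr : ∀ m (hm : trace m = 0), trace ((hψsurj m hm).choose) = 0 :=
    fun m hm => (hψsurj m hm).choose_spec.1
  have hchooseψ : ∀ m (hm : trace m = 0), ψ ((hψsurj m hm).choose) = m :=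
    fun m hm => (hψsurj m hm).choose_spec.2
  have hSψ : ∀ a, trace a = 0 → S (ψ a) = θ a := by
    intro a ha
    have hta : trace (ψ a) = 0 := hψtr a ha
    rw [hSval _ hta]
    have he : (hψsurj (ψ a) hta).choose = a :=
      hψinj _ _ (hchoosetr _ hta) ha (by rw [hchooseψ _ hta])
    rw [he]
  have Sadd : ∀ a b, trace a = 0 → trace b = 0 → S (a + b) = S a + S b := by
    intro a b ha hb
    have hab : trace (a + b) = 0 := by rw [Matrix.trace_add, ha, hb, add_zero]
    have hu := hchooseψ a ha
    have hv := hchooseψ b hb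
    have hw : (hψsurj (a+b) hab).choose = (hψsurj a ha).choose + (hψsurj b hb).choose := by
      apply hψinj _ _ (hchoosetr _ hab)
      · rw [Matrix.trace_add, hchoosetr a ha, hchoosetr b hb, add_zero]
      · rw [hchooseψ _ hab, hψadd, hu, hv]
    rw [hSval _ hab, hSval _ ha, hSval _ hb, hw, hθadd]
  have Ssmul : ∀ (r : F) a, trace a = 0 → S (r • a) = r • S a := by
    intro r a ha
    have hra : trace (r • a) = 0 := by rw [Matrix.trace_smul, ha, smul_zero]
    have hw : (hψsurj (r • a) hra).choose = r • (hψsurj a ha).choose := by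
      apply hψinj _ _ (hchoosetr _ hra)
      · rw [Matrix.trace_smul, hchoosetr a ha, smul_zero]
      · rw [hchooseψ _ hra, hψsmul, hchooseψ a ha]
    rw [hSval _ hra, hSval _ ha, hw, hθsmul]
  have Scomm : ∀ a m, trace a = 0 → trace m = 0 →
      S (a * m - m * a) = a * S m - S m * a := by
    intro a m ha hm
    have hcm : trace (a * m - m * a) = 0 := by
      rw [Matrix.trace_sub, Matrix.trace_mul_comm, sub_self]
    set b := (hψsurj a ha).choose with hbdef
    set u := (hψsurj m hm).choose with hudef
    have hbu : trace (b * u - u * b) = 0 := by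
      rw [Matrix.trace_sub, Matrix.trace_mul_comm, sub_self]
    have hw : (hψsurj (a * m - m * a) hcm).choose = b * u - u * b := by
      apply hψinj _ _ (hchoosetr _ hcm) hbu
      rw [hchooseψ _ hcm, hψbr b u (hchoosetr a ha) (hchoosetr m hm),
        hchooseψ a ha, hchooseψ m hm]
    rw [hSval _ hcm, hSval _ hm, hw,
      hmix b u (hchoosetr a ha) (hchoosetr m hm), hchooseψ a ha]
  obtain ⟨c, hc⟩ := schur_scalar h2' hn hchar
    (fun {i j k l} hij hkl => exists_diag h2' hchar hij hkl) S Sadd Ssmul Scomm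
  have hθψ : ∀ x, trace x = 0 → θ x = c • ψ x := by
    intro x hx
    rw [← hSψ x hx]
    exact hc (ψ x) (hψtr x hx)
  -- nonvanishing of c
  set i0 : Fin (n+1) := ⟨0, by omega⟩ with hi0
  set i1 : Fin (n+1) := ⟨1, by omega⟩ with hi1
  set i2 : Fin (n+1) := ⟨2, by omega⟩ with hi2
  have h01 : i0 ≠ i1 := by simp [hi0, hi1, Fin.ext_iff]
  have h12 : i1 ≠ i2 := by simp [hi1, hi2, Fin.ext_iff]
  have h02 : i0 ≠ i2 := by simp [hi0, hi2, Fin.ext_iff]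
  have hcne : c ≠ 0 := by
    obtain ⟨x, hxtr, hxθ⟩ := hθsurj (single i0 i1 1)
      (Matrix.trace_single_eq_of_ne i0 i1 1 h01)
    intro hc0
    have hh := hθψ x hxtr
    rw [hxθ, hc0, zero_smul] at hh
    have := congrFun (congrFun hh i0) i1
    simp at this
  -- the transported Jordan-type relation
  have hPrel : ∀ x y, trace x = 0 → trace y = 0 →
      ψ (PD x y) = (c * c) • PD (ψ x) (ψ y) := by
    intro x y hx hy
    have h := hoddbr x y hx hy
    rw [hθψ x hx, hθψ y hy] at h
    simp only [smul_mul_assoc, mul_smul_comm, smul_smul, ← smul_add] at h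
    rw [sharpD_smul] at h
    exact h
  have hψsq : ∀ x, trace x = 0 → ψ (sharpD (x * x)) = (c * c) • sharpD (ψ x * ψ x) := by
    intro x hx
    have h := hPrel x x hx hx
    have e1 : PD x x = sharpD (x*x) + sharpD (x*x) := by
      show sharpD (x*x + x*x) = _
      rw [sharpD_add]
    have e2 : PD (ψ x) (ψ x) = sharpD (ψ x * ψ x) + sharpD (ψ x * ψ x) := by
      show sharpD (ψ x * ψ x + ψ x * ψ x) = _
      rw [sharpD_add]
    rw [e1, e2, hψadd, smul_add] at h
    have h2'' : (2:F) • ψ (sharpD (x*x)) = (2:F) • ((c*c) • sharpD (ψ x * ψ x)) := by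
      rw [two_smul, two_smul]
      exact h
    calc ψ (sharpD (x*x)) = (2:F)⁻¹ • ((2:F) • ψ (sharpD (x*x))) := by
          rw [smul_smul, inv_mul_cancel₀ h2', one_smul]
      _ = (2:F)⁻¹ • ((2:F) • ((c*c) • sharpD (ψ x * ψ x))) := by rw [h2'']
      _ = (c*c) • sharpD (ψ x * ψ x) := by rw [smul_smul, inv_mul_cancel₀ h2', one_smul]
  -- special elements
  set X0 : Matrix (Fin (n+1)) (Fin (n+1)) F :=
    single i0 i1 1 + single i1 i2 1 with hX0
  set Y0 : Matrix (Fin (n+1)) (Fin (n+1)) F := single i2 i0 1 with hY0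
  have hX0tr : trace X0 = 0 := by
    rw [hX0, Matrix.trace_add, Matrix.trace_single_eq_of_ne i0 i1 1 h01,
      Matrix.trace_single_eq_of_ne i1 i2 1 h12, add_zero]
  have hY0tr : trace Y0 = 0 := Matrix.trace_single_eq_of_ne i2 i0 1 (Ne.symm h02)
  obtain ⟨x, hxtr, hxψ⟩ := hψsurj X0 hX0tr
  obtain ⟨y, hytr, hyψ⟩ := hψsurj Y0 hY0tr
  -- transport the main identity through ψ
  have hmainx := congrArg ψ (main_id x y hxtr hytr)
  rw [hψsub, hψadd, hψsub] at hmainx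
  simp only [hψsmul] at hmainx
  have hL : ψ (PD x (PD x y)) = (c^4) • PD (ψ x) (PD (ψ x) (ψ y)) := by
    rw [hPrel x (PD x y) hxtr (trace_PD hchar x y), hPrel x y hxtr hytr,
      PD_smul_right, smul_smul, show ((c*c)*(c*c) : F) = c^4 from by ring]
  have hA : ψ (PD (sharpD (x*x)) y) = (c^4) • PD (sharpD (ψ x * ψ x)) (ψ y) := by
    rw [hPrel (sharpD (x*x)) y (trace_sharpD hchar _) hytr, hψsq x hxtr, PD_smul_left,
      smul_smul, show ((c*c)*(c*c) : F) = c^4 from by ring]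
  have hw : trace (x*y - y*x) = 0 := by
    rw [Matrix.trace_sub, Matrix.trace_mul_comm, sub_self]
  have hBr : ψ (x*(x*y - y*x) - (x*y - y*x)*x)
      = ψ x * (ψ x * ψ y - ψ y * ψ x) - (ψ x * ψ y - ψ y * ψ x) * ψ x := by
    rw [hψbr x (x*y - y*x) hxtr hw, hψbr x y hxtr hytr]
  rw [hL, hA, hBr, hxψ, hyψ] at hmainx
  have hmainX := main_id X0 Y0 hX0tr hY0tr
  have hcomb := hmainx.symm.trans (congrArg (fun M => (c^4) • M) hmainX)
  -- product computations
  have hE1 : single i0 i1 (1:F) * single i2 i0 1 = 0 := by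
    apply Matrix.single_mul_single_of_ne
    exact h12
  have hE2 : single i1 i2 (1:F) * single i2 i0 1 = single i1 i0 1 := by
    rw [Matrix.single_mul_single_same, one_mul]
  have hXY : X0 * Y0 = single i1 i0 1 := by
    rw [hX0, hY0, add_mul, hE1, hE2, zero_add]
  have hE3 : single i2 i0 (1:F) * single i0 i1 1 = single i2 i1 1 := by
    rw [Matrix.single_mul_single_same, one_mul]
  have hE4 : single i2 i0 (1:F) * single i1 i2 1 = 0 := by
    apply Matrix.single_mul_single_of_ne
    exact h01
  have hYX : Y0 * X0 = single i2 i1 1 := by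
    rw [hY0, hX0, mul_add, hE3, hE4, add_zero]
  rw [hXY, hYX] at hcomb
  have hE5 : X0 * single i1 i0 1 = single i0 i0 1 := by
    rw [hX0, add_mul]
    have hz : single i1 i2 (1:F) * single i1 i0 1 = 0 := by
      apply Matrix.single_mul_single_of_ne
      exact Ne.symm h12
    rw [hz, Matrix.single_mul_single_same, one_mul, add_zero]
  have hE6 : X0 * single i2 i1 1 = single i1 i1 1 := by
    rw [hX0, add_mul]
    have hz : single i0 i1 (1:F) * single i2 i1 1 = 0 := by
      apply Matrix.single_mul_single_of_ne
      exact h12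
    rw [hz, Matrix.single_mul_single_same, one_mul, zero_add]
  have hE7 : single i1 i0 (1:F) * X0 = single i1 i1 1 := by
    rw [hX0, mul_add]
    have hz : single i1 i0 (1:F) * single i1 i2 1 = 0 := by
      apply Matrix.single_mul_single_of_ne
      exact h01
    rw [hz, Matrix.single_mul_single_same, one_mul, add_zero]
  have hE8 : single i2 i1 (1:F) * X0 = single i2 i2 1 := by
    rw [hX0, mul_add]
    have hz : single i2 i1 (1:F) * single i0 i1 1 = 0 := by
      apply Matrix.single_mul_single_of_ne
      exact Ne.symm h01
    rw [hz, Matrix.single_mul_single_same, one_mul, zero_add]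
  rw [mul_sub, sub_mul, hE5, hE6, hE7, hE8] at hcomb
  have hX000 : X0 i0 i0 = 0 := by
    rw [hX0, Matrix.add_apply, Matrix.single_apply_of_col_ne i0 i0 (Ne.symm h01),
      Matrix.single_apply_of_row_ne (Ne.symm h01), add_zero]
  have hY000 : Y0 i0 i0 = 0 := by
    rw [hY0]
    exact Matrix.single_apply_of_row_ne (Ne.symm h02) i0 i0 1
  have hent := congrFun (congrFun hcomb i0) i0
  simp only [Matrix.add_apply, Matrix.sub_apply, Matrix.smul_apply, smul_eq_mul,
    Matrix.single_apply_same,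
    Matrix.single_apply_of_row_ne (Ne.symm h01),
    Matrix.single_apply_of_row_ne (Ne.symm h02),
    Matrix.single_apply_of_col_ne i0 i0 (Ne.symm h01),
    Matrix.single_apply_of_col_ne i2 i0 (Ne.symm h02),
    hX000, hY000, mul_zero, mul_one, add_zero, zero_add, sub_zero] at hent
  have hc4 : c ^ 4 = 1 := by linear_combination hent
  refine ⟨c, hcne, hc4, ?_⟩
  intro x hx
  rw [hodd x hx, hθψ x hx]
end

section
/- Let G be an abelian group, F a field with char F ≠ 2, R = Mₙ(F), and Γ: R = ⊕_g R_g a G-grading of the associative algebra R. Suppose χ: G → F^× is a group homomorphism and φ: R → R is an anti-automorphism such that φ(x) = χ(g)x for all x ∈ R_g, and let h ∈ G be an element with h² = e and χ(h) = -1. If x ∈ R_a, y ∈ R_b and xy = z₀ + z₁ with z₀ ∈ R_{ab}, z₁ ∈ R_{abh} (possible since R_{ab} ⊕ R_{abh} is closed under products modulo the coarsening by ⟨h⟩), then xy - yx = 2z₁ ∈ R_{abh}. -/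
open Matrix

/-- Key computation of Lemma 4.5: if `φ` is an anti-automorphism of
`R = Mₙ(F)` acting on each component `R_g` of a `G`-grading as the scalar `χ(g)`, and
`h² = e`, `χ(h) = -1`, then for `x ∈ R_a`, `y ∈ R_b` with `xy = z₀ + z₁`, `z₀ ∈ R_{ab}`,
`z₁ ∈ R_{abh}`, one has `xy - yx = 2z₁ ∈ R_{abh}`. -/
theorem stmt_15 (F : Type*) [Field F] (h2 : ringChar F ≠ 2) (n : ℕ)
    (G : Type*) [CommGroup G]
    (ℛ : G → Submodule F (Matrix (Fin n) (Fin n) F))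
    (hmul : ∀ (g g' : G) (x y : Matrix (Fin n) (Fin n) F),
      x ∈ ℛ g → y ∈ ℛ g' → x * y ∈ ℛ (g * g'))
    (χ : G →* Fˣ)
    (φ : Matrix (Fin n) (Fin n) F → Matrix (Fin n) (Fin n) F)
    (hφadd : ∀ x y, φ (x + y) = φ x + φ y)
    (hφanti : ∀ x y, φ (x * y) = φ y * φ x)
    (hφχ : ∀ (g : G), ∀ x ∈ ℛ g, φ x = ((χ g : Fˣ) : F) • x)
    (h : G) (hh : h * h = 1) (hχh : ((χ h : Fˣ) : F) = -1)
    (a b : G) (x y z₀ z₁ : Matrix (Fin n) (Fin n) F)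
    (hx : x ∈ ℛ a) (hy : y ∈ ℛ b)
    (hz : x * y = z₀ + z₁) (hz₀ : z₀ ∈ ℛ (a * b)) (hz₁ : z₁ ∈ ℛ (a * b * h)) :
    x * y - y * x = (2 : F) • z₁ ∧ x * y - y * x ∈ ℛ (a * b * h) := by
  have key : y * x = z₀ - z₁ := by
    have h1 : φ (x * y) = ((χ (a*b) : Fˣ) : F) • (y * x) := by
      rw [hφanti, hφχ a x hx, hφχ b y hy, smul_mul_smul_comm, _root_.map_mul]
      push_cast
      ring_nf
    have h2 : φ (x * y) = ((χ (a*b) : Fˣ) : F) • (z₀ - z₁) := by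
      rw [hz, hφadd, hφχ _ z₀ hz₀, hφχ _ z₁ hz₁, _root_.map_mul χ (a*b) h, smul_sub]
      push_cast [hχh]
      module
    have := h1.symm.trans h2
    exact smul_right_injective _ (by exact_mod_cast (χ (a*b)).ne_zero) this
  constructor
  · rw [hz, key]; module
  · rw [hz, key]
    have : z₀ + z₁ - (z₀ - z₁) = (2:F) • z₁ := by module
    rw [this]
    exact Submodule.smul_mem _ _ hz₁
end
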